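/- arXiv:1109.0336 — 2 statements merged into one kernel-verified Lean document; each statement's English description precedes it below -/
import Mathlib

section
/- Let p,q ≥ 0, n = p+q ≥ 1. For every (p,q)-clan γ, the set Q_γ of complete flags in ℂⁿ is nonempty; that is, there exists a complete flag F with dim(F_i ∩ E_p) = γ(i;+) and dim(F_i ∩ Ẽ_q) = γ(i;−) for all 1 ≤ i ≤ n, and dim(π(F_i) + F_j) = j + γ(i;j) for all 1 ≤ i < j ≤ n. -/
open Finset Module

noncomputable section

/-- Symbols of an FS-pattern: `+`, `-`, `F` (first occurrence / opener),
`S` (second occurrence / closer). -/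
inductive FSSymbol : Type
  | plus : FSSymbol
  | minus : FSSymbol
  | fst : FSSymbol
  | snd : FSSymbol
  deriving DecidableEq

/-- A `(p,q)`-clan on `{1,…,p+q}` (positions are `Fin (p+q)`, `0`-based).
`symbol i = Sum.inl j` means positions `i` and `j` carry the same natural
number (they form an arc), and `symbol i = Sum.inr true` (resp. `false`)
means position `i` carries a `+` (resp. a `-`).  The number of `+`'s minus
the number of `-`'s equals `p - q`. -/
structure Clan (p q : ℕ) where
  symbol : Fin (p + q) → (Fin (p + q)) ⊕ Bool
  mate_ne : ∀ i j, symbol i = Sum.inl j → j ≠ i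
  mate_invol : ∀ i j, symbol i = Sum.inl j → symbol j = Sum.inl i
  balance : (univ.filter fun i => symbol i = Sum.inr true).card + q
      = (univ.filter fun i => symbol i = Sum.inr false).card + p

namespace Clan

variable {p q : ℕ}

/-- `γ(i;+)`: the number of `+` signs and of arcs `(s,t)` with `t ≤ i`
among the first `i` positions (`i` is `1`-based). -/
def cplus (γ : Clan p q) (i : ℕ) : ℕ :=
  (univ.filter fun k : Fin (p + q) =>
    k.val < i ∧ (γ.symbol k = Sum.inr true ∨ ∃ j, γ.symbol k = Sum.inl j ∧ j < k)).card

/-- `γ(i;-)`: the number of `-` signs and of arcs `(s,t)` with `t ≤ i`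
among the first `i` positions (`i` is `1`-based). -/
def cminus (γ : Clan p q) (i : ℕ) : ℕ :=
  (univ.filter fun k : Fin (p + q) =>
    k.val < i ∧ (γ.symbol k = Sum.inr false ∨ ∃ j, γ.symbol k = Sum.inl j ∧ j < k)).card

/-- `γ(i;j)`: the number of arcs `(s,t)` with `s ≤ i < j < t`
(`i`, `j` are `1`-based). -/
def cpair (γ : Clan p q) (i j : ℕ) : ℕ :=
  (univ.filter fun s : Fin (p + q) =>
    s.val < i ∧ ∃ t, γ.symbol s = Sum.inl t ∧ s < t ∧ j ≤ t.val).card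

/-- The FS-pattern of a clan: signs stay, openers become `F`, closers `S`. -/
def FS (γ : Clan p q) (i : Fin (p + q)) : FSSymbol :=
  match γ.symbol i with
  | Sum.inr true => FSSymbol.plus
  | Sum.inr false => FSSymbol.minus
  | Sum.inl j => if j < i then FSSymbol.snd else FSSymbol.fst

/-- A clan avoids the pattern `(1,2,1,2)` iff no two of its arcs cross. -/
def Avoids1212 (γ : Clan p q) : Prop :=
  ¬ ∃ i1 i2 i3 i4 : Fin (p + q), i1 < i2 ∧ i2 < i3 ∧ i3 < i4 ∧
      γ.symbol i1 = Sum.inl i3 ∧ γ.symbol i2 = Sum.inl i4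

/-- `γ₊`: positions carrying a `+` or the second occurrence of a number. -/
def plusSet (γ : Clan p q) : Finset (Fin (p + q)) :=
  univ.filter fun i => γ.symbol i = Sum.inr true ∨ ∃ j, γ.symbol i = Sum.inl j ∧ j < i

/-- `γ̃₊`: positions carrying a `+` or the first occurrence of a number. -/
def tplusSet (γ : Clan p q) : Finset (Fin (p + q)) :=
  univ.filter fun i => γ.symbol i = Sum.inr true ∨ ∃ j, γ.symbol i = Sum.inl j ∧ i < j

end Clan

/-- The rank matrix `r_w(i,j) = #{k ≤ i : w(k) ≤ j}` (`i`, `j` are `1`-based). -/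
def rankMatrix {n : ℕ} (w : Equiv.Perm (Fin n)) (i j : ℕ) : ℕ :=
  (univ.filter fun k : Fin n => k.val < i ∧ (w k).val < j).card

/-- `u` is the permutation `u(γ)`: it assigns the values `p, p-1, …, 1` to the
positions of `γ₊` taken in increasing order, and `n, n-1, …, p+1` to the
positions of `γ₋` taken in increasing order (values are `0`-based, so the
`1`-based value of `u` at `i` is `(u i).val + 1`). -/
def IsUPerm {p q : ℕ} (γ : Clan p q) (u : Equiv.Perm (Fin (p + q))) : Prop :=
  ∀ i : Fin (p + q),
    (i ∈ γ.plusSet → (u i).val + 1 + (γ.plusSet.filter fun j => j < i).card = p) ∧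
    (i ∉ γ.plusSet →
      (u i).val + 1 + (univ.filter fun j => j ∉ γ.plusSet ∧ j < i).card = p + q)

/-- `v` is the permutation `v(γ)`: it assigns the values `1, …, p` to the
positions of `γ̃₊` taken in increasing order, and `p+1, …, n` to the
positions of `γ̃₋` taken in increasing order (values are `0`-based). -/
def IsVPerm {p q : ℕ} (γ : Clan p q) (v : Equiv.Perm (Fin (p + q))) : Prop :=
  ∀ i : Fin (p + q),
    (i ∈ γ.tplusSet → (v i).val = (γ.tplusSet.filter fun j => j < i).card) ∧
    (i ∉ γ.tplusSet →
      (v i).val = p + (univ.filter fun j => j ∉ γ.tplusSet ∧ j < i).card)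

/-- `E_j ⊆ ℂⁿ`: the span of the first `j` standard basis vectors, realized as
the subspace of vectors vanishing in coordinates `≥ j`. -/
def Efirst (n j : ℕ) : Submodule ℂ (Fin n → ℂ) :=
  ⨅ k ∈ {k : Fin n | j ≤ k.val}, LinearMap.ker (LinearMap.proj k : (Fin n → ℂ) →ₗ[ℂ] ℂ)

/-- `Ẽ_j ⊆ ℂⁿ`: the span of the last `j` standard basis vectors, realized as
the subspace of vectors vanishing in coordinates `< n - j`. -/
def Elast (n j : ℕ) : Submodule ℂ (Fin n → ℂ) :=
  ⨅ k ∈ {k : Fin n | k.val < n - j}, LinearMap.ker (LinearMap.proj k : (Fin n → ℂ) →ₗ[ℂ] ℂ)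

/-- The projection `π : ℂⁿ → E_p` with kernel `Ẽ_q` (for `n = p + q`). -/
def projE (n p : ℕ) : (Fin n → ℂ) →ₗ[ℂ] (Fin n → ℂ) where
  toFun v := fun k => if k.val < p then v k else 0
  map_add' u v := by funext k; by_cases h : k.val < p <;> simp [h]
  map_smul' c v := by funext k; by_cases h : k.val < p <;> simp [h]

/-- A complete flag `F_0 ⊂ F_1 ⊂ ⋯ ⊂ F_n` in `ℂⁿ`, `dim F_i = i`. -/
structure CompleteFlag (n : ℕ) where
  F : Fin (n + 1) → Submodule ℂ (Fin n → ℂ)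
  mono : Monotone F
  finrank_eq : ∀ i, finrank ℂ ↥(F i) = i.val

/-- Membership of a complete flag in the set `Q_γ`: the three linear-algebraic
conditions of Theorem `orbit_description`. -/
def MemQ {p q : ℕ} (γ : Clan p q) (Fl : CompleteFlag (p + q)) : Prop :=
  (∀ i : ℕ, 1 ≤ i → ∀ hi : i ≤ p + q,
      finrank ℂ ↥(Fl.F ⟨i, by omega⟩ ⊓ Efirst (p + q) p) = γ.cplus i ∧
      finrank ℂ ↥(Fl.F ⟨i, by omega⟩ ⊓ Elast (p + q) q) = γ.cminus i) ∧
  (∀ i j : ℕ, 1 ≤ i → ∀ hij : i < j, ∀ hj : j ≤ p + q,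
      finrank ℂ ↥((Fl.F ⟨i, by omega⟩).map (projE (p + q) p) ⊔ Fl.F ⟨j, by omega⟩)
        = j + γ.cpair i j)

/-- Membership in `K = GL(p,ℂ) × GL(q,ℂ)`, the block-diagonal subgroup of
`GL(p+q, ℂ)`: all entries mixing the first `p` and last `q` coordinates
vanish. -/
def InK (p q : ℕ) (g : (Matrix (Fin (p + q)) (Fin (p + q)) ℂ)ˣ) : Prop :=
  ∀ i j : Fin (p + q), ¬(i.val < p ↔ j.val < p) →
    (g : Matrix (Fin (p + q)) (Fin (p + q)) ℂ) i j = 0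

/-- `Fl' = g · Fl`: the flag `Fl'` is obtained by applying the invertible
matrix `g` to each subspace of the flag `Fl`. -/
def FlagMapsTo {n : ℕ} (g : (Matrix (Fin n) (Fin n) ℂ)ˣ) (Fl Fl' : CompleteFlag n) : Prop :=
  ∀ i, Fl'.F i = (Fl.F i).map (Matrix.mulVecLin (g : Matrix (Fin n) (Fin n) ℂ))

/-- A partial matching of `{1,…,n}`, given by its set of arcs `(s,t)`, `s < t`;
distinct arcs are disjoint. -/
def IsPartialMatching {n : ℕ} (M : Finset (Fin n × Fin n)) : Prop :=
  (∀ a ∈ M, a.1 < a.2) ∧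
  ∀ a ∈ M, ∀ b ∈ M, a ≠ b → a.1 ≠ b.1 ∧ a.1 ≠ b.2 ∧ a.2 ≠ b.1 ∧ a.2 ≠ b.2

/-- The number of crossing pairs of arcs of `M` (each crossing pair counted
once, ordered by its smaller opener). -/
def crossNum {n : ℕ} (M : Finset (Fin n × Fin n)) : ℕ :=
  ((M ×ˢ M).filter fun ab =>
    ab.1.1 < ab.2.1 ∧ ab.2.1 < ab.1.2 ∧ ab.1.2 < ab.2.2).card

/-- `M` is a noncrossing partial matching whose openers are exactly the
`F`-positions of the pattern `d` and whose closers are exactly the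
`S`-positions of `d`. -/
def MatchesPattern {n : ℕ} (d : Fin n → FSSymbol) (M : Finset (Fin n × Fin n)) : Prop :=
  IsPartialMatching M ∧
  (∀ i : Fin n, (∃ t, (i, t) ∈ M) ↔ d i = FSSymbol.fst) ∧
  (∀ i : Fin n, (∃ s, (s, i) ∈ M) ↔ d i = FSSymbol.snd) ∧
  ¬ ∃ a ∈ M, ∃ b ∈ M, a.1 < b.1 ∧ b.1 < a.2 ∧ a.2 < b.2

/-- The values `{w(1),…,w(i)}` arranged in increasing order. -/
def sortedPrefix {n : ℕ} (w : Equiv.Perm (Fin n)) (i : ℕ) : List (Fin n) :=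
  Finset.sort ((univ.filter fun k : Fin n => k.val < i).image w) (· ≤ ·)

namespace ClanProof

open Submodule

/-! ### Generic helpers -/

/-- Triangular independence. -/
theorem pivot_li {n : ℕ} {ι : Type*} [DecidableEq ι] (v : ι → Fin n → ℂ) (piv : ι → Fin n) (rk : ι → ℕ)
    (h1 : ∀ k, v k (piv k) ≠ 0)
    (h2 : ∀ k k', k' ≠ k → rk k' ≤ rk k → v k' (piv k) = 0) :
    LinearIndependent ℂ v := by
  rw [linearIndependent_iff']
  intro s
  induction s using Finset.strongInduction with
  | _ s ih =>
    intro g hsum i hi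
    obtain ⟨m, hm, hmax⟩ := Finset.exists_max_image s rk ⟨i, hi⟩
    have h0' : ∑ k ∈ s, g k * v k (piv m) = 0 := by
      simpa [Finset.sum_apply] using congrFun hsum (piv m)
    have hgm : g m = 0 := by
      rw [Finset.sum_eq_single m
        (fun b hb hbm => by rw [h2 m b hbm (hmax b hb), mul_zero])
        (fun hms => absurd hm hms)] at h0'
      exact (mul_eq_zero.1 h0').resolve_right (h1 m)
    rcases eq_or_ne i m with rfl | hne
    · exact hgm
    · refine ih (s.erase m) (Finset.erase_ssubset hm) g ?_ i (Finset.mem_erase.2 ⟨hne, hi⟩)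
      rw [Finset.sum_erase_eq_sub hm, hsum, hgm, zero_smul, sub_zero]

theorem finrank_span_T {n : ℕ} (T : Finset (Fin n)) (u : Fin n → Fin n → ℂ)
    (piv : Fin n → Fin n) (rk : Fin n → ℕ)
    (h1 : ∀ k ∈ T, u k (piv k) ≠ 0)
    (h2 : ∀ k ∈ T, ∀ k' ∈ T, k' ≠ k → rk k' ≤ rk k → u k' (piv k) = 0) :
    Module.finrank ℂ ↥(span ℂ (u '' ↑T)) = T.card := by
  have hli : LinearIndependent ℂ (fun k : {x // x ∈ T} => u k) :=
    pivot_li _ (fun k : {x // x ∈ T} => piv k) (fun k : {x // x ∈ T} => rk k)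
      (fun k => h1 k k.2)
      (fun k k' hne hrk => h2 k k.2 k' k'.2 (fun h => hne (Subtype.ext h)) hrk)
  have himg : Set.range (fun k : {x // x ∈ T} => u k) = u '' ↑T := by
    ext x
    simp [Set.mem_image, Set.mem_range]
  rw [← himg, finrank_span_eq_card hli, Fintype.card_coe]

theorem card_filter_val_lt (n i : ℕ) (h : i ≤ n) :
    (Finset.univ.filter fun k : Fin n => k.val < i).card = i := by
  have hset : (Finset.univ.filter fun k : Fin n => k.val < i)
      = (Finset.range i).attachFin
        (fun m hm => lt_of_lt_of_le (Finset.mem_range.1 hm) h) := by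
    ext k
    simp [Finset.mem_attachFin]
  rw [hset, Finset.card_attachFin, Finset.card_range]

theorem mem_Efirst {n j : ℕ} (x : Fin n → ℂ) :
    x ∈ Efirst n j ↔ ∀ k : Fin n, j ≤ k.val → x k = 0 := by
  simp [Efirst, Submodule.mem_iInf]

theorem mem_Elast {n j : ℕ} (x : Fin n → ℂ) :
    x ∈ Elast n j ↔ ∀ k : Fin n, k.val < n - j → x k = 0 := by
  simp [Elast, Submodule.mem_iInf]

theorem sum_single_filter {n : ℕ} (P : Fin n → Prop) [DecidablePred P] (x : Fin n → ℂ)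
    (hx : ∀ k, ¬ P k → x k = 0) :
    ∑ k ∈ Finset.univ.filter P, x k • (Pi.single k 1 : Fin n → ℂ) = x := by
  funext c
  rw [Finset.sum_apply]
  by_cases hc : P c
  · rw [Finset.sum_eq_single_of_mem c (by simp [hc])]
    · simp
    · intro b _ hbc
      simp [Pi.single_eq_of_ne (Ne.symm hbc)]
  · rw [Finset.sum_eq_zero, hx c hc]
    intro b hb
    have hbc : c ≠ b := by
      rintro rfl
      exact hc (by simpa using hb)
    simp [Pi.single_eq_of_ne hbc]

theorem Efirst_eq_span (n j : ℕ) :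
    Efirst n j = span ℂ ((fun a => Pi.single a (1:ℂ)) '' {a : Fin n | a.val < j}) := by
  apply le_antisymm
  · intro x hx
    rw [mem_Efirst] at hx
    have hrep := sum_single_filter (fun k : Fin n => k.val < j) x
      (fun k hk => hx k (le_of_not_gt hk))
    rw [← hrep]
    refine Submodule.sum_mem _ (fun k hk => Submodule.smul_mem _ _ (subset_span ?_))
    exact ⟨k, by simpa using hk, rfl⟩
  · rw [span_le]
    rintro _ ⟨a, ha, rfl⟩
    rw [SetLike.mem_coe, mem_Efirst]
    intro k hk
    refine Pi.single_eq_of_ne (fun h => ?_) 1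
    simp only [Set.mem_setOf_eq] at ha
    subst h
    omega

theorem Elast_eq_span (n j : ℕ) :
    Elast n j = span ℂ ((fun a => Pi.single a (1:ℂ)) '' {a : Fin n | n - j ≤ a.val}) := by
  apply le_antisymm
  · intro x hx
    rw [mem_Elast] at hx
    have hrep := sum_single_filter (fun k : Fin n => n - j ≤ k.val) x
      (fun k hk => hx k (lt_of_not_ge hk))
    rw [← hrep]
    refine Submodule.sum_mem _ (fun k hk => Submodule.smul_mem _ _ (subset_span ?_))
    exact ⟨k, by simpa using hk, rfl⟩
  · rw [span_le]
    rintro _ ⟨a, ha, rfl⟩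
    rw [SetLike.mem_coe, mem_Elast]
    intro k hk
    refine Pi.single_eq_of_ne (fun h => ?_) 1
    simp only [Set.mem_setOf_eq] at ha
    subst h
    omega

theorem coe_filter_eq_setOf {n : ℕ} (P : Fin n → Prop) [DecidablePred P] :
    ↑(Finset.univ.filter P) = {a : Fin n | P a} := by
  ext a; simp

theorem finrank_Efirst (n j : ℕ) (h : j ≤ n) :
    Module.finrank ℂ ↥(Efirst n j) = j := by
  rw [Efirst_eq_span, ← coe_filter_eq_setOf (fun a : Fin n => a.val < j),
    finrank_span_T _ _ id (fun _ => 0)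
      (fun k _ => by simp)
      (fun k _ k' _ hne _ => Pi.single_eq_of_ne (fun hh => hne hh.symm) 1),
    card_filter_val_lt n j h]

theorem finrank_Elast (n j : ℕ) (h : j ≤ n) :
    Module.finrank ℂ ↥(Elast n j) = j := by
  rw [Elast_eq_span, ← coe_filter_eq_setOf (fun a : Fin n => n - j ≤ a.val),
    finrank_span_T _ _ id (fun _ => 0)
      (fun k _ => by simp)
      (fun k _ k' _ hne _ => Pi.single_eq_of_ne (fun hh => hne hh.symm) 1)]
  have := Finset.card_filter_add_card_filter_not
    (s := (Finset.univ : Finset (Fin n))) (p := fun a : Fin n => a.val < n - j)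
  simp only [Finset.card_univ, Fintype.card_fin] at this
  have h2 : (Finset.univ.filter fun a : Fin n => ¬ a.val < n - j)
      = (Finset.univ.filter fun a : Fin n => n - j ≤ a.val) := by
    ext a; simp [not_lt]
  rw [h2] at this
  rw [card_filter_val_lt n (n - j) (by omega)] at this
  omega


/-! ### Clan combinatorics -/

variable {p q : ℕ}

def isOp (γ : Clan p q) (k : Fin (p + q)) : Prop := ∃ j, γ.symbol k = Sum.inl j ∧ k < j
def isCl (γ : Clan p q) (k : Fin (p + q)) : Prop := ∃ j, γ.symbol k = Sum.inl j ∧ j < k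

instance (γ : Clan p q) : DecidablePred (isOp γ) := fun k => by unfold isOp; infer_instance
instance (γ : Clan p q) : DecidablePred (isCl γ) := fun k => by unfold isCl; infer_instance

def mate (γ : Clan p q) (k : Fin (p + q)) : Fin (p + q) := Sum.elim id (fun _ => k) (γ.symbol k)

theorem mate_eq {γ : Clan p q} {k j : Fin (p + q)} (h : γ.symbol k = Sum.inl j) :
    mate γ k = j := by simp [mate, h]

theorem isOp_def {γ : Clan p q} {k} (h : isOp γ k) :
    γ.symbol k = Sum.inl (mate γ k) ∧ k < mate γ k := by
  obtain ⟨j, h1, h2⟩ := h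
  rw [mate_eq h1]; exact ⟨h1, h2⟩

theorem isCl_def {γ : Clan p q} {k} (h : isCl γ k) :
    γ.symbol k = Sum.inl (mate γ k) ∧ mate γ k < k := by
  obtain ⟨j, h1, h2⟩ := h
  rw [mate_eq h1]; exact ⟨h1, h2⟩

theorem isCl_mate {γ : Clan p q} {k} (h : isOp γ k) :
    isCl γ (mate γ k) ∧ mate γ (mate γ k) = k := by
  obtain ⟨h1, h2⟩ := isOp_def h
  have h3 := γ.mate_invol k (mate γ k) h1
  exact ⟨⟨k, h3, h2⟩, mate_eq h3⟩

theorem isOp_mate {γ : Clan p q} {k} (h : isCl γ k) :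
    isOp γ (mate γ k) ∧ mate γ (mate γ k) = k := by
  obtain ⟨h1, h2⟩ := isCl_def h
  have h3 := γ.mate_invol k (mate γ k) h1
  exact ⟨⟨k, h3, h2⟩, mate_eq h3⟩

theorem cases4 (γ : Clan p q) (k : Fin (p + q)) :
    γ.symbol k = Sum.inr true ∨ γ.symbol k = Sum.inr false ∨ isOp γ k ∨ isCl γ k := by
  rcases h : γ.symbol k with j | b
  · rcases (γ.mate_ne k j h).lt_or_gt with hj | hj
    · exact Or.inr (Or.inr (Or.inr ⟨j, h, hj⟩))
    · exact Or.inr (Or.inr (Or.inl ⟨j, h, hj⟩))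
  · cases b
    · exact Or.inr (Or.inl rfl)
    · exact Or.inl rfl

theorem plus_not_op {γ : Clan p q} {k} (h : γ.symbol k = Sum.inr true) : ¬ isOp γ k := by
  rintro ⟨j, hj, -⟩; rw [h] at hj; simp at hj

theorem plus_not_cl {γ : Clan p q} {k} (h : γ.symbol k = Sum.inr true) : ¬ isCl γ k := by
  rintro ⟨j, hj, -⟩; rw [h] at hj; simp at hj

theorem minus_not_op {γ : Clan p q} {k} (h : γ.symbol k = Sum.inr false) : ¬ isOp γ k := by
  rintro ⟨j, hj, -⟩; rw [h] at hj; simp at hj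

theorem minus_not_cl {γ : Clan p q} {k} (h : γ.symbol k = Sum.inr false) : ¬ isCl γ k := by
  rintro ⟨j, hj, -⟩; rw [h] at hj; simp at hj

theorem plus_not_minus {γ : Clan p q} {k} (h : γ.symbol k = Sum.inr true) :
    ¬ γ.symbol k = Sum.inr false := by rw [h]; simp

theorem op_not_cl {γ : Clan p q} {k} (h : isOp γ k) : ¬ isCl γ k := fun h' =>
  absurd (isOp_def h).2 (not_lt.2 (le_of_lt (isCl_def h').2))

def bsS (γ : Clan p q) : Finset (Fin (p + q)) :=
  Finset.univ.filter fun k => γ.symbol k = Sum.inr false ∨ isOp γ k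

theorem mem_tp {γ : Clan p q} {k} :
    k ∈ γ.tplusSet ↔ (γ.symbol k = Sum.inr true ∨ isOp γ k) := by
  simp [Clan.tplusSet, isOp]

theorem mem_bs {γ : Clan p q} {k} :
    k ∈ bsS γ ↔ (γ.symbol k = Sum.inr false ∨ isOp γ k) := by
  simp [bsS]

theorem cl_not_tp {γ : Clan p q} {k} (h : isCl γ k) : k ∉ γ.tplusSet := by
  rw [mem_tp]
  rintro (h' | h')
  · exact plus_not_cl h' h
  · exact op_not_cl h' h

theorem cl_not_bs {γ : Clan p q} {k} (h : isCl γ k) : k ∉ bsS γ := by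
  rw [mem_bs]
  rintro (h' | h')
  · exact minus_not_cl h' h
  · exact op_not_cl h' h

theorem minus_not_tp {γ : Clan p q} {k} (h : γ.symbol k = Sum.inr false) : k ∉ γ.tplusSet := by
  rw [mem_tp]
  rintro (h' | h')
  · rw [h] at h'; simp at h'
  · exact minus_not_op h h'

theorem plus_not_bs {γ : Clan p q} {k} (h : γ.symbol k = Sum.inr true) : k ∉ bsS γ := by
  rw [mem_bs]
  rintro (h' | h')
  · rw [h] at h'; simp at h'
  · exact plus_not_op h h'

/-! ### Counting -/

def cntP (γ : Clan p q) (i : ℕ) : ℕ :=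
  (Finset.univ.filter fun k : Fin (p + q) => k.val < i ∧ γ.symbol k = Sum.inr true).card
def cntM (γ : Clan p q) (i : ℕ) : ℕ :=
  (Finset.univ.filter fun k : Fin (p + q) => k.val < i ∧ γ.symbol k = Sum.inr false).card
def cntO (γ : Clan p q) (i : ℕ) : ℕ :=
  (Finset.univ.filter fun k : Fin (p + q) => k.val < i ∧ isOp γ k).card
def cntC (γ : Clan p q) (i : ℕ) : ℕ :=
  (Finset.univ.filter fun k : Fin (p + q) => k.val < i ∧ isCl γ k).card

theorem card_filter_or {n : ℕ} (P Q R : Fin n → Prop)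
    [DecidablePred P] [DecidablePred Q] [DecidablePred R]
    (hx : ∀ k, ¬ (Q k ∧ R k)) :
    (Finset.univ.filter fun k => P k ∧ (Q k ∨ R k)).card
      = (Finset.univ.filter fun k => P k ∧ Q k).card
        + (Finset.univ.filter fun k => P k ∧ R k).card := by
  rw [← Finset.card_union_of_disjoint]
  · congr 1; ext k; simp; tauto
  · rw [Finset.disjoint_left]
    intro a ha hb
    simp only [Finset.mem_filter] at ha hb
    exact hx a ⟨ha.2.2, hb.2.2⟩

theorem cnt_partition (γ : Clan p q) (i : ℕ) (hi : i ≤ p + q) :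
    (cntP γ i + cntM γ i) + (cntO γ i + cntC γ i) = i := by
  classical
  have h0 : (Finset.univ.filter fun k : Fin (p + q) => k.val < i ∧
      ((γ.symbol k = Sum.inr true ∨ γ.symbol k = Sum.inr false) ∨ (isOp γ k ∨ isCl γ k))).card
      = i := by
    rw [show (Finset.univ.filter fun k : Fin (p + q) => k.val < i ∧
      ((γ.symbol k = Sum.inr true ∨ γ.symbol k = Sum.inr false) ∨ (isOp γ k ∨ isCl γ k)))
      = Finset.univ.filter fun k : Fin (p + q) => k.val < i from by
        ext k
        simp only [Finset.mem_filter, Finset.mem_univ, true_and, and_iff_left_iff_imp]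
        intro _
        rcases cases4 γ k with h | h | h | h <;> tauto]
    exact card_filter_val_lt _ _ hi
  rw [card_filter_or (fun k => k.val < i) _ _
    (by rintro k ⟨(h1 | h1), (h2 | h2)⟩
        · exact plus_not_op h1 h2
        · exact plus_not_cl h1 h2
        · exact minus_not_op h1 h2
        · exact minus_not_cl h1 h2)] at h0
  rw [card_filter_or (fun k => k.val < i) _ _
    (fun k h => plus_not_minus h.1 h.2)] at h0
  rw [card_filter_or (fun k => k.val < i) _ _
    (fun k h => op_not_cl h.1 h.2)] at h0
  exact h0

theorem cplus_eq (γ : Clan p q) (i : ℕ) : γ.cplus i = cntP γ i + cntC γ i := by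
  rw [Clan.cplus, show (Finset.univ.filter fun k : Fin (p + q) =>
      k.val < i ∧ (γ.symbol k = Sum.inr true ∨ ∃ j, γ.symbol k = Sum.inl j ∧ j < k))
      = Finset.univ.filter fun k : Fin (p + q) =>
      k.val < i ∧ (γ.symbol k = Sum.inr true ∨ isCl γ k) from by ext k; rw [Finset.mem_filter, Finset.mem_filter]; simp [isCl]]
  exact card_filter_or (fun k => k.val < i) _ _ (fun k h => plus_not_cl h.1 h.2)

theorem cminus_eq (γ : Clan p q) (i : ℕ) : γ.cminus i = cntM γ i + cntC γ i := by
  rw [Clan.cminus, show (Finset.univ.filter fun k : Fin (p + q) =>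
      k.val < i ∧ (γ.symbol k = Sum.inr false ∨ ∃ j, γ.symbol k = Sum.inl j ∧ j < k))
      = Finset.univ.filter fun k : Fin (p + q) =>
      k.val < i ∧ (γ.symbol k = Sum.inr false ∨ isCl γ k) from by ext k; rw [Finset.mem_filter, Finset.mem_filter]; simp [isCl]]
  exact card_filter_or (fun k => k.val < i) _ _ (fun k h => minus_not_cl h.1 h.2)

theorem card_cl_mate_lt (γ : Clan p q) (i : ℕ) :
    (Finset.univ.filter fun t => isCl γ t ∧ (mate γ t).val < i).card = cntO γ i := by
  refine Finset.card_nbij' (mate γ) (mate γ) ?_ ?_ ?_ ?_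
  · intro a ha
    simp only [Finset.mem_coe, Finset.mem_filter, Finset.mem_univ, true_and] at ha ⊢
    exact ⟨ha.2, (isOp_mate ha.1).1⟩
  · intro a ha
    simp only [Finset.mem_coe, Finset.mem_filter, Finset.mem_univ, true_and] at ha ⊢
    exact ⟨(isCl_mate ha.2).1, by rw [(isCl_mate ha.2).2]; exact ha.1⟩
  · intro a ha
    simp only [Finset.mem_coe, Finset.mem_filter, Finset.mem_univ, true_and] at ha
    exact (isOp_mate ha.1).2
  · intro a ha
    simp only [Finset.mem_coe, Finset.mem_filter, Finset.mem_univ, true_and] at ha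
    exact (isCl_mate ha.2).2

theorem card_cl_cpair (γ : Clan p q) (i j : ℕ) :
    (Finset.univ.filter fun t => isCl γ t ∧ (mate γ t).val < i ∧ j ≤ t.val).card
      = γ.cpair i j := by
  rw [Clan.cpair]
  refine Finset.card_nbij' (mate γ) (mate γ) ?_ ?_ ?_ ?_
  · intro a ha
    simp only [Finset.mem_coe, Finset.mem_filter, Finset.mem_univ, true_and] at ha ⊢
    obtain ⟨hcl, h1, h2⟩ := ha
    have h3 := isOp_def (isOp_mate hcl).1
    rw [(isOp_mate hcl).2] at h3
    exact ⟨h1, a, h3.1, h3.2, h2⟩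
  · intro a ha
    simp only [Finset.mem_coe, Finset.mem_filter, Finset.mem_univ, true_and] at ha ⊢
    obtain ⟨h1, t, hst, hlt, hjt⟩ := ha
    have hop : isOp γ a := ⟨t, hst, hlt⟩
    refine ⟨(isCl_mate hop).1, by rw [(isCl_mate hop).2]; exact h1, ?_⟩
    rw [mate_eq hst]; exact hjt
  · intro a ha
    simp only [Finset.mem_coe, Finset.mem_filter, Finset.mem_univ, true_and] at ha
    exact (isOp_mate ha.1).2
  · intro a ha
    simp only [Finset.mem_coe, Finset.mem_filter, Finset.mem_univ, true_and] at ha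
    obtain ⟨h1, t, hst, hlt, hjt⟩ := ha
    exact (isCl_mate ⟨t, hst, hlt⟩).2

theorem tp_bs_card (γ : Clan p q) : γ.tplusSet.card = p ∧ (bsS γ).card = q := by
  have hpart := cnt_partition γ (p + q) le_rfl
  have hoc : cntC γ (p + q) = cntO γ (p + q) := by
    rw [cntC, cntO, show (Finset.univ.filter fun k : Fin (p+q) => k.val < p + q ∧ isOp γ k)
      = Finset.univ.filter fun k : Fin (p+q) => isOp γ k ∧ (mate γ k).val < p + q from by
        ext k; simp [k.isLt, (mate γ k).isLt]]
    refine Finset.card_nbij' (mate γ) (mate γ) ?_ ?_ ?_ ?_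
    · intro a ha
      simp only [Finset.mem_coe, Finset.mem_filter, Finset.mem_univ, true_and] at ha ⊢
      exact ⟨(isOp_mate ha.2).1, Fin.isLt _⟩
    · intro a ha
      simp only [Finset.mem_coe, Finset.mem_filter, Finset.mem_univ, true_and] at ha ⊢
      exact ⟨Fin.isLt _, (isCl_mate ha.1).1⟩
    · intro a ha
      simp only [Finset.mem_coe, Finset.mem_filter, Finset.mem_univ, true_and] at ha
      exact (isOp_mate ha.2).2
    · intro a ha
      simp only [Finset.mem_coe, Finset.mem_filter, Finset.mem_univ, true_and] at ha
      exact (isCl_mate ha.1).2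
  have hbal := γ.balance
  have hbalP : (Finset.univ.filter fun k : Fin (p+q) => γ.symbol k = Sum.inr true).card
      = cntP γ (p + q) := by
    rw [cntP]; congr 1; ext k; simp [k.isLt]
  have hbalM : (Finset.univ.filter fun k : Fin (p+q) => γ.symbol k = Sum.inr false).card
      = cntM γ (p + q) := by
    rw [cntM]; congr 1; ext k; simp [k.isLt]
  rw [hbalP, hbalM] at hbal
  have htp : γ.tplusSet.card = cntP γ (p + q) + cntO γ (p + q) := by
    rw [show γ.tplusSet = Finset.univ.filter fun k : Fin (p+q) =>
        k.val < p + q ∧ (γ.symbol k = Sum.inr true ∨ isOp γ k) from by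
      ext k
      rw [mem_tp]
      simp [k.isLt]]
    exact card_filter_or _ _ _ (fun k h => plus_not_op h.1 h.2)
  have hbs : (bsS γ).card = cntM γ (p + q) + cntO γ (p + q) := by
    rw [show bsS γ = Finset.univ.filter fun k : Fin (p+q) =>
        k.val < p + q ∧ (γ.symbol k = Sum.inr false ∨ isOp γ k) from by
      ext k
      rw [mem_bs]
      simp [k.isLt]]
    exact card_filter_or _ _ _ (fun k h => minus_not_op h.1 h.2)
  omega

theorem tp_card (γ : Clan p q) : γ.tplusSet.card = p := (tp_bs_card γ).1
theorem bs_card (γ : Clan p q) : (bsS γ).card = q := (tp_bs_card γ).2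

/-! ### Coordinates -/

def rkA (γ : Clan p q) (k : Fin (p + q)) : ℕ := (γ.tplusSet.filter fun j => j < k).card
def rkB (γ : Clan p q) (k : Fin (p + q)) : ℕ := ((bsS γ).filter fun j => j < k).card

theorem rkA_lt_p {γ : Clan p q} {k} (hk : k ∈ γ.tplusSet) : rkA γ k < p := by
  have h2 : (γ.tplusSet.filter fun j => j < k).card < γ.tplusSet.card := by
    apply Finset.card_lt_card
    rw [Finset.ssubset_iff_of_subset (Finset.filter_subset _ _)]
    exact ⟨k, hk, by simp⟩
  rwa [tp_card γ] at h2

theorem rkB_lt_q {γ : Clan p q} {k} (hk : k ∈ bsS γ) : rkB γ k < q := by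
  have h2 : ((bsS γ).filter fun j => j < k).card < (bsS γ).card := by
    apply Finset.card_lt_card
    rw [Finset.ssubset_iff_of_subset (Finset.filter_subset _ _)]
    exact ⟨k, hk, by simp⟩
  rwa [bs_card γ] at h2

theorem rkA_mono {γ : Clan p q} {k k'} (hk : k ∈ γ.tplusSet) (h : k < k') :
    rkA γ k < rkA γ k' := by
  apply Finset.card_lt_card
  rw [Finset.ssubset_iff_of_subset (fun x hx => by
    rw [Finset.mem_filter] at hx ⊢
    exact ⟨hx.1, lt_trans hx.2 h⟩)]
  exact ⟨k, by simp [hk, h], by simp⟩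

theorem rkB_mono {γ : Clan p q} {k k'} (hk : k ∈ bsS γ) (h : k < k') :
    rkB γ k < rkB γ k' := by
  apply Finset.card_lt_card
  rw [Finset.ssubset_iff_of_subset (fun x hx => by
    rw [Finset.mem_filter] at hx ⊢
    exact ⟨hx.1, lt_trans hx.2 h⟩)]
  exact ⟨k, by simp [hk, h], by simp⟩

noncomputable def ACo (γ : Clan p q) (k : Fin (p + q)) : Fin (p + q) :=
  if h : rkA γ k < p + q then ⟨rkA γ k, h⟩ else k

noncomputable def BCo (γ : Clan p q) (k : Fin (p + q)) : Fin (p + q) :=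
  if h : p + rkB γ k < p + q then ⟨p + rkB γ k, h⟩ else k

theorem ACo_val {γ : Clan p q} {k} (hk : k ∈ γ.tplusSet) : (ACo γ k).val = rkA γ k := by
  rw [ACo, dif_pos (lt_of_lt_of_le (rkA_lt_p hk) (Nat.le_add_right p q))]

theorem BCo_val {γ : Clan p q} {k} (hk : k ∈ bsS γ) : (BCo γ k).val = p + rkB γ k := by
  rw [BCo, dif_pos (by have := rkB_lt_q hk; omega)]

theorem ACo_lt {γ : Clan p q} {k} (hk : k ∈ γ.tplusSet) : (ACo γ k).val < p := by
  rw [ACo_val hk]; exact rkA_lt_p hk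

theorem BCo_ge {γ : Clan p q} {k} (hk : k ∈ bsS γ) : p ≤ (BCo γ k).val := by
  rw [BCo_val hk]; omega

theorem ACo_ne_BCo {γ : Clan p q} {k k'} (hk : k ∈ γ.tplusSet) (hk' : k' ∈ bsS γ) :
    ACo γ k ≠ BCo γ k' := by
  intro h
  have h1 := ACo_lt hk
  have h2 := BCo_ge hk'
  rw [h] at h1
  omega

theorem ACo_inj {γ : Clan p q} {k k'} (hk : k ∈ γ.tplusSet) (hk' : k' ∈ γ.tplusSet)
    (hne : k ≠ k') : ACo γ k ≠ ACo γ k' := by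
  intro h
  have hv : rkA γ k = rkA γ k' := by rw [← ACo_val hk, ← ACo_val hk', h]
  rcases hne.lt_or_gt with hlt | hlt
  · exact (rkA_mono hk hlt).ne hv
  · exact (rkA_mono hk' hlt).ne hv.symm

theorem BCo_inj {γ : Clan p q} {k k'} (hk : k ∈ bsS γ) (hk' : k' ∈ bsS γ)
    (hne : k ≠ k') : BCo γ k ≠ BCo γ k' := by
  intro h
  have hv : rkB γ k = rkB γ k' := by
    have := congrArg Fin.val h
    rw [BCo_val hk, BCo_val hk'] at this
    omega
  rcases hne.lt_or_gt with hlt | hlt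
  · exact (rkB_mono hk hlt).ne hv
  · exact (rkB_mono hk' hlt).ne hv.symm

theorem ACo_surj (γ : Clan p q) {a : Fin (p + q)} (ha : a.val < p) :
    ∃ k ∈ γ.tplusSet, ACo γ k = a := by
  classical
  let f : {x // x ∈ γ.tplusSet} → Fin p := fun k => ⟨rkA γ k.1, rkA_lt_p k.2⟩
  have hinj : Function.Injective f := by
    intro k k' h
    by_contra hne
    have hne' : (k : Fin (p + q)) ≠ (k' : Fin (p + q)) := fun hh => hne (Subtype.ext hh)
    refine ACo_inj k.2 k'.2 hne' (Fin.ext ?_)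
    rw [ACo_val k.2, ACo_val k'.2]
    exact congrArg Fin.val h
  have hbij : Function.Bijective f :=
    (Fintype.bijective_iff_injective_and_card f).2
      ⟨hinj, by simp [Fintype.card_coe, tp_card]⟩
  obtain ⟨k, hk⟩ := hbij.2 ⟨a.val, ha⟩
  refine ⟨k.1, k.2, Fin.ext ?_⟩
  rw [ACo_val k.2]
  exact congrArg Fin.val hk

theorem BCo_surj (γ : Clan p q) {a : Fin (p + q)} (ha : p ≤ a.val) :
    ∃ k ∈ bsS γ, BCo γ k = a := by
  classical
  let f : {x // x ∈ bsS γ} → Fin q := fun k => ⟨rkB γ k.1, rkB_lt_q k.2⟩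
  have hinj : Function.Injective f := by
    intro k k' h
    by_contra hne
    have hne' : (k : Fin (p + q)) ≠ (k' : Fin (p + q)) := fun hh => hne (Subtype.ext hh)
    refine BCo_inj k.2 k'.2 hne' (Fin.ext ?_)
    rw [BCo_val k.2, BCo_val k'.2]
    exact congrArg (fun m : ℕ => p + m) (congrArg Fin.val h)
  have hbij : Function.Bijective f :=
    (Fintype.bijective_iff_injective_and_card f).2
      ⟨hinj, by simp [Fintype.card_coe, bs_card]⟩
  obtain ⟨k, hk⟩ := hbij.2 ⟨a.val - p, by have := a.isLt; omega⟩
  refine ⟨k.1, k.2, Fin.ext ?_⟩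
  rw [BCo_val k.2]
  have := congrArg Fin.val hk
  simp only [f] at this
  omega

/-! ### The adapted basis vectors -/

def sing {n : ℕ} (a : Fin n) : Fin n → ℂ := Pi.single a 1

theorem sing_same {n : ℕ} (a : Fin n) : sing a a = 1 := Pi.single_eq_same a 1

theorem sing_ne {n : ℕ} {a c : Fin n} (h : c ≠ a) : sing a c = 0 := Pi.single_eq_of_ne h 1

noncomputable def wv (γ : Clan p q) (k : Fin (p + q)) : Fin (p + q) → ℂ :=
  if γ.symbol k = Sum.inr true then sing (ACo γ k)
  else if γ.symbol k = Sum.inr false then sing (BCo γ k)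
  else if isOp γ k then sing (ACo γ k) + sing (BCo γ k)
  else sing (BCo γ (mate γ k))

theorem wv_plus {γ : Clan p q} {k} (h : γ.symbol k = Sum.inr true) :
    wv γ k = sing (ACo γ k) := if_pos h

theorem wv_minus {γ : Clan p q} {k} (h : γ.symbol k = Sum.inr false) :
    wv γ k = sing (BCo γ k) := by
  rw [wv, if_neg (fun hh => plus_not_minus hh h), if_pos h]

theorem wv_op {γ : Clan p q} {k} (h : isOp γ k) :
    wv γ k = sing (ACo γ k) + sing (BCo γ k) := by
  rw [wv, if_neg (fun hh => plus_not_op hh h), if_neg (fun hh => minus_not_op hh h), if_pos h]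

theorem wv_cl {γ : Clan p q} {k} (h : isCl γ k) :
    wv γ k = sing (BCo γ (mate γ k)) := by
  rw [wv, if_neg (fun hh => plus_not_cl hh h), if_neg (fun hh => minus_not_cl hh h),
    if_neg (fun hh => op_not_cl hh h)]

noncomputable def piv0 (γ : Clan p q) (k : Fin (p + q)) : Fin (p + q) :=
  if γ.symbol k = Sum.inr true then ACo γ k
  else if γ.symbol k = Sum.inr false then BCo γ k
  else if isOp γ k then ACo γ k
  else BCo γ (mate γ k)

def rk0 (γ : Clan p q) (k : Fin (p + q)) : ℕ := if isOp γ k then 1 else 0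

theorem piv0_plus {γ : Clan p q} {k} (h : γ.symbol k = Sum.inr true) :
    piv0 γ k = ACo γ k := if_pos h

theorem piv0_minus {γ : Clan p q} {k} (h : γ.symbol k = Sum.inr false) :
    piv0 γ k = BCo γ k := by
  rw [piv0, if_neg (fun hh => plus_not_minus hh h), if_pos h]

theorem piv0_op {γ : Clan p q} {k} (h : isOp γ k) : piv0 γ k = ACo γ k := by
  rw [piv0, if_neg (fun hh => plus_not_op hh h), if_neg (fun hh => minus_not_op hh h), if_pos h]

theorem piv0_cl {γ : Clan p q} {k} (h : isCl γ k) : piv0 γ k = BCo γ (mate γ k) := by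
  rw [piv0, if_neg (fun hh => plus_not_cl hh h), if_neg (fun hh => minus_not_cl hh h),
    if_neg (fun hh => op_not_cl hh h)]

theorem plus_tp {γ : Clan p q} {k} (h : γ.symbol k = Sum.inr true) : k ∈ γ.tplusSet :=
  mem_tp.2 (Or.inl h)
theorem op_tp {γ : Clan p q} {k} (h : isOp γ k) : k ∈ γ.tplusSet := mem_tp.2 (Or.inr h)
theorem minus_bs {γ : Clan p q} {k} (h : γ.symbol k = Sum.inr false) : k ∈ bsS γ :=
  mem_bs.2 (Or.inl h)
theorem op_bs {γ : Clan p q} {k} (h : isOp γ k) : k ∈ bsS γ := mem_bs.2 (Or.inr h)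
theorem cl_mate_bs {γ : Clan p q} {k} (h : isCl γ k) : mate γ k ∈ bsS γ :=
  op_bs (isOp_mate h).1

theorem mate_inj_cl {γ : Clan p q} {k k'} (h : isCl γ k) (h' : isCl γ k') (hne : k ≠ k') :
    mate γ k ≠ mate γ k' := by
  intro hm
  apply hne
  rw [← (isOp_mate h).2, ← (isOp_mate h').2, hm]

theorem ne_mate_of_minus {γ : Clan p q} {k k'} (h : γ.symbol k = Sum.inr false)
    (h' : isCl γ k') : k ≠ mate γ k' := by
  intro hm
  exact minus_not_op h (hm ▸ (isOp_mate h').1)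

theorem ne_mate_of_plus {γ : Clan p q} {k k'} (h : γ.symbol k = Sum.inr true)
    (h' : isCl γ k') : k ≠ mate γ k' := by
  intro hm
  exact plus_not_op h (hm ▸ (isOp_mate h').1)

theorem wv_piv0_ne (γ : Clan p q) (k : Fin (p + q)) : wv γ k (piv0 γ k) ≠ 0 := by
  rcases cases4 γ k with h | h | h | h
  · rw [wv_plus h, piv0_plus h, sing_same]; exact one_ne_zero
  · rw [wv_minus h, piv0_minus h, sing_same]; exact one_ne_zero
  · rw [wv_op h, piv0_op h, Pi.add_apply, sing_same,
      sing_ne (ACo_ne_BCo (op_tp h) (op_bs h))]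
    norm_num
  · rw [wv_cl h, piv0_cl h, sing_same]; exact one_ne_zero

theorem wv_piv0_zero (γ : Clan p q) (k k' : Fin (p + q)) (hne : k' ≠ k)
    (hrk : rk0 γ k' ≤ rk0 γ k) : wv γ k' (piv0 γ k) = 0 := by
  rcases cases4 γ k with h | h | h | h
  · -- k plus, pivot ACo k
    rw [piv0_plus h]
    rcases cases4 γ k' with h' | h' | h' | h'
    · rw [wv_plus h']; exact sing_ne (ACo_inj (plus_tp h) (plus_tp h') hne.symm)
    · rw [wv_minus h']; exact sing_ne (ACo_ne_BCo (plus_tp h) (minus_bs h'))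
    · exfalso; rw [rk0, rk0, if_pos h', if_neg (plus_not_op h)] at hrk; omega
    · rw [wv_cl h']; exact sing_ne (ACo_ne_BCo (plus_tp h) (cl_mate_bs h'))
  · -- k minus, pivot BCo k
    rw [piv0_minus h]
    rcases cases4 γ k' with h' | h' | h' | h'
    · rw [wv_plus h']; exact sing_ne (Ne.symm (ACo_ne_BCo (plus_tp h') (minus_bs h)))
    · rw [wv_minus h']; exact sing_ne (BCo_inj (minus_bs h) (minus_bs h') hne.symm)
    · exfalso; rw [rk0, rk0, if_pos h', if_neg (minus_not_op h)] at hrk; omega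
    · rw [wv_cl h']
      exact sing_ne (BCo_inj (minus_bs h) (cl_mate_bs h') (ne_mate_of_minus h h'))
  · -- k opener, pivot ACo k
    rw [piv0_op h]
    rcases cases4 γ k' with h' | h' | h' | h'
    · rw [wv_plus h']; exact sing_ne (ACo_inj (op_tp h) (plus_tp h') hne.symm)
    · rw [wv_minus h']; exact sing_ne (ACo_ne_BCo (op_tp h) (minus_bs h'))
    · rw [wv_op h', Pi.add_apply, sing_ne (ACo_inj (op_tp h) (op_tp h') hne.symm),
        sing_ne (ACo_ne_BCo (op_tp h) (op_bs h')), add_zero]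
    · rw [wv_cl h']; exact sing_ne (ACo_ne_BCo (op_tp h) (cl_mate_bs h'))
  · -- k closer, pivot BCo (mate k)
    rw [piv0_cl h]
    rcases cases4 γ k' with h' | h' | h' | h'
    · rw [wv_plus h']; exact sing_ne (Ne.symm (ACo_ne_BCo (plus_tp h') (cl_mate_bs h)))
    · rw [wv_minus h']
      exact sing_ne (BCo_inj (cl_mate_bs h) (minus_bs h') (Ne.symm (ne_mate_of_minus h' h)))
    · exfalso
      rw [rk0, rk0, if_pos h', if_neg (fun hh => op_not_cl hh h)] at hrk
      omega
    · rw [wv_cl h']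
      exact sing_ne (BCo_inj (cl_mate_bs h) (cl_mate_bs h')
        (mate_inj_cl h h' hne.symm))

/-! ### The flag -/

def T0 (n i : ℕ) : Finset (Fin n) := Finset.univ.filter fun k => k.val < i

theorem finrank_flag (γ : Clan p q) (i : ℕ) (hi : i ≤ p + q) :
    Module.finrank ℂ ↥(span ℂ (wv γ '' ↑(T0 (p + q) i))) = i := by
  rw [finrank_span_T _ _ (piv0 γ) (rk0 γ) (fun k _ => wv_piv0_ne γ k)
    (fun k _ k' _ hne hrk => wv_piv0_zero γ k k' hne hrk), T0, card_filter_val_lt _ _ hi]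

theorem mem_T0 {n i : ℕ} {k : Fin n} : k ∈ T0 n i ↔ k.val < i := by simp [T0]

/-! ### Case A : intersection with `E_p` -/

def TA (γ : Clan p q) (i : ℕ) : Finset (Fin (p + q)) :=
  γ.tplusSet ∪ Finset.univ.filter (fun k => k.val < i ∧ γ.symbol k = Sum.inr false)
    ∪ Finset.univ.filter (fun t => isCl γ t ∧ (mate γ t).val < i)

theorem mem_TA {γ : Clan p q} {i : ℕ} {k} : k ∈ TA γ i ↔
    k ∈ γ.tplusSet ∨ (k.val < i ∧ γ.symbol k = Sum.inr false)
      ∨ (isCl γ k ∧ (mate γ k).val < i) := by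
  simp [TA, or_assoc]

noncomputable def uA (γ : Clan p q) (k : Fin (p + q)) : Fin (p + q) → ℂ :=
  if k ∈ γ.tplusSet then sing (ACo γ k)
  else if γ.symbol k = Sum.inr false then sing (BCo γ k)
  else sing (BCo γ (mate γ k))

noncomputable def pivA (γ : Clan p q) (k : Fin (p + q)) : Fin (p + q) :=
  if k ∈ γ.tplusSet then ACo γ k
  else if γ.symbol k = Sum.inr false then BCo γ k
  else BCo γ (mate γ k)

theorem uA_tp {γ : Clan p q} {k} (h : k ∈ γ.tplusSet) : uA γ k = sing (ACo γ k) := if_pos h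
theorem pivA_tp {γ : Clan p q} {k} (h : k ∈ γ.tplusSet) : pivA γ k = ACo γ k := if_pos h

theorem uA_minus {γ : Clan p q} {k} (h : γ.symbol k = Sum.inr false) :
    uA γ k = sing (BCo γ k) := by rw [uA, if_neg (minus_not_tp h), if_pos h]
theorem pivA_minus {γ : Clan p q} {k} (h : γ.symbol k = Sum.inr false) :
    pivA γ k = BCo γ k := by rw [pivA, if_neg (minus_not_tp h), if_pos h]

theorem uA_cl {γ : Clan p q} {k} (h : isCl γ k) : uA γ k = sing (BCo γ (mate γ k)) := by
  rw [uA, if_neg (cl_not_tp h), if_neg (fun hh => minus_not_cl hh h)]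
theorem pivA_cl {γ : Clan p q} {k} (h : isCl γ k) : pivA γ k = BCo γ (mate γ k) := by
  rw [pivA, if_neg (cl_not_tp h), if_neg (fun hh => minus_not_cl hh h)]

theorem h1A (γ : Clan p q) (i : ℕ) : ∀ k ∈ TA γ i, uA γ k (pivA γ k) ≠ 0 := by
  intro k hk
  rcases mem_TA.1 hk with h | ⟨_, h⟩ | ⟨h, _⟩
  · rw [uA_tp h, pivA_tp h, sing_same]; exact one_ne_zero
  · rw [uA_minus h, pivA_minus h, sing_same]; exact one_ne_zero
  · rw [uA_cl h, pivA_cl h, sing_same]; exact one_ne_zero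

theorem h2A (γ : Clan p q) (i : ℕ) : ∀ k ∈ TA γ i, ∀ k' ∈ TA γ i, k' ≠ k →
    (fun _ : Fin (p + q) => 0) k' ≤ (fun _ : Fin (p + q) => (0:ℕ)) k →
    uA γ k' (pivA γ k) = 0 := by
  intro k hk k' hk' hne _
  rcases mem_TA.1 hk with h | ⟨_, h⟩ | ⟨h, _⟩ <;>
    rcases mem_TA.1 hk' with h' | ⟨_, h'⟩ | ⟨h', _⟩
  · rw [pivA_tp h, uA_tp h']; exact sing_ne (ACo_inj h h' hne.symm)
  · rw [pivA_tp h, uA_minus h']; exact sing_ne (ACo_ne_BCo h (minus_bs h'))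
  · rw [pivA_tp h, uA_cl h']; exact sing_ne (ACo_ne_BCo h (cl_mate_bs h'))
  · rw [pivA_minus h, uA_tp h']; exact sing_ne (Ne.symm (ACo_ne_BCo h' (minus_bs h)))
  · rw [pivA_minus h, uA_minus h']
    exact sing_ne (BCo_inj (minus_bs h) (minus_bs h') hne.symm)
  · rw [pivA_minus h, uA_cl h']
    exact sing_ne (BCo_inj (minus_bs h) (cl_mate_bs h') (ne_mate_of_minus h h'))
  · rw [pivA_cl h, uA_tp h']; exact sing_ne (Ne.symm (ACo_ne_BCo h' (cl_mate_bs h)))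
  · rw [pivA_cl h, uA_minus h']
    exact sing_ne (BCo_inj (cl_mate_bs h) (minus_bs h') (Ne.symm (ne_mate_of_minus h' h)))
  · rw [pivA_cl h, uA_cl h']
    exact sing_ne (BCo_inj (cl_mate_bs h) (cl_mate_bs h') (mate_inj_cl h h' hne.symm))

theorem spanA (γ : Clan p q) (i : ℕ) :
    span ℂ (wv γ '' ↑(T0 (p + q) i)) ⊔ Efirst (p + q) p
      = span ℂ (uA γ '' ↑(TA γ i)) := by
  rw [Efirst_eq_span, ← Submodule.span_union]
  apply Submodule.span_eq_span
  · rintro x (⟨k, hk, rfl⟩ | ⟨a, ha, rfl⟩)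
    · have hki : k.val < i := by
        rw [Finset.mem_coe, mem_T0] at hk; exact hk
      rcases cases4 γ k with h | h | h | h
      · exact subset_span ⟨k, Finset.mem_coe.2 (mem_TA.2 (Or.inl (plus_tp h))),
          by rw [uA_tp (plus_tp h), wv_plus h]⟩
      · exact subset_span ⟨k, Finset.mem_coe.2 (mem_TA.2 (Or.inr (Or.inl ⟨hki, h⟩))),
          by rw [uA_minus h, wv_minus h]⟩
      · have hclm := isCl_mate h
        have hmem1 : uA γ k ∈ span ℂ (uA γ '' ↑(TA γ i)) :=
          subset_span ⟨k, Finset.mem_coe.2 (mem_TA.2 (Or.inl (op_tp h))), rfl⟩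
        have hmem2 : uA γ (mate γ k) ∈ span ℂ (uA γ '' ↑(TA γ i)) :=
          subset_span ⟨mate γ k, Finset.mem_coe.2 (mem_TA.2 (Or.inr (Or.inr
            ⟨hclm.1, by rw [hclm.2]; exact hki⟩))), rfl⟩
        have heq : wv γ k = uA γ k + uA γ (mate γ k) := by
          rw [wv_op h, uA_tp (op_tp h), uA_cl hclm.1, hclm.2]
        rw [heq]
        exact Submodule.add_mem _ hmem1 hmem2
      · have hmk : (mate γ k).val < k.val := (isCl_def h).2
        exact subset_span ⟨k, Finset.mem_coe.2 (mem_TA.2 (Or.inr (Or.inr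
          ⟨h, by omega⟩))), by rw [uA_cl h, wv_cl h]⟩
    · simp only [Set.mem_setOf_eq] at ha
      obtain ⟨k, hk, rfl⟩ := ACo_surj γ ha
      exact subset_span ⟨k, Finset.mem_coe.2 (mem_TA.2 (Or.inl hk)), by rw [uA_tp hk]; rfl⟩
  · rintro x ⟨k, hk, rfl⟩
    rw [Finset.mem_coe] at hk
    rcases mem_TA.1 hk with h | ⟨hki, h⟩ | ⟨h, hmi⟩
    · apply subset_span
      right
      exact ⟨ACo γ k, ACo_lt h, by rw [uA_tp h]; rfl⟩
    · apply subset_span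
      left
      exact ⟨k, Finset.mem_coe.2 (mem_T0.2 hki), by rw [uA_minus h, wv_minus h]⟩
    · have hop := (isOp_mate h).1
      have hmm := (isOp_mate h).2
      have hw : wv γ (mate γ k) ∈ span ℂ ((wv γ '' ↑(T0 (p + q) i)) ∪
          ((fun a => Pi.single a (1:ℂ)) '' {a : Fin (p + q) | a.val < p})) :=
        subset_span (Or.inl ⟨mate γ k, Finset.mem_coe.2 (mem_T0.2 hmi), rfl⟩)
      have hs : (Pi.single (ACo γ (mate γ k)) (1:ℂ) : Fin (p+q) → ℂ) ∈ span ℂ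
          ((wv γ '' ↑(T0 (p + q) i)) ∪
          ((fun a => Pi.single a (1:ℂ)) '' {a : Fin (p + q) | a.val < p})) :=
        subset_span (Or.inr ⟨ACo γ (mate γ k), ACo_lt (op_tp hop), rfl⟩)
      have heq : uA γ k = wv γ (mate γ k) - sing (ACo γ (mate γ k)) := by
        rw [uA_cl h, wv_op hop, add_sub_cancel_left]
      rw [heq]
      exact Submodule.sub_mem _ hw hs

theorem cardTA (γ : Clan p q) (i : ℕ) :
    (TA γ i).card = p + (cntM γ i + cntO γ i) := by
  rw [TA, Finset.card_union_of_disjoint, Finset.card_union_of_disjoint, tp_card,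
    card_cl_mate_lt]
  · rw [cntM]; omega
  · rw [Finset.disjoint_left]
    intro a ha hb
    simp only [Finset.mem_filter, Finset.mem_univ, true_and] at hb
    exact minus_not_tp hb.2 ha
  · rw [Finset.disjoint_left]
    intro a ha hb
    simp only [Finset.mem_filter, Finset.mem_univ, true_and, Finset.mem_union] at ha hb
    rcases ha with ha | ha
    · exact cl_not_tp hb.1 ha
    · exact minus_not_cl ha.2 hb.1

theorem caseA (γ : Clan p q) (i : ℕ) (hi : i ≤ p + q) :
    Module.finrank ℂ ↥(span ℂ (wv γ '' ↑(T0 (p + q) i)) ⊓ Efirst (p + q) p)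
      = γ.cplus i := by
  have hsum := Submodule.finrank_sup_add_finrank_inf_eq
    (span ℂ (wv γ '' ↑(T0 (p + q) i))) (Efirst (p + q) p)
  rw [finrank_flag γ i hi, finrank_Efirst (p + q) p (Nat.le_add_right p q),
    spanA γ i, finrank_span_T _ _ (pivA γ) (fun _ => 0) (h1A γ i) (h2A γ i),
    cardTA γ i] at hsum
  have hpart := cnt_partition γ i hi
  have hcp := cplus_eq γ i
  omega

/-! ### Case B : intersection with `Ẽ_q` -/

def TB (γ : Clan p q) (i : ℕ) : Finset (Fin (p + q)) :=
  bsS γ ∪ Finset.univ.filter (fun k => k.val < i ∧ γ.symbol k = Sum.inr true)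
    ∪ Finset.univ.filter (fun t => isCl γ t ∧ (mate γ t).val < i)

theorem mem_TB {γ : Clan p q} {i : ℕ} {k} : k ∈ TB γ i ↔
    k ∈ bsS γ ∨ (k.val < i ∧ γ.symbol k = Sum.inr true)
      ∨ (isCl γ k ∧ (mate γ k).val < i) := by
  simp [TB, or_assoc]

noncomputable def uB (γ : Clan p q) (k : Fin (p + q)) : Fin (p + q) → ℂ :=
  if k ∈ bsS γ then sing (BCo γ k)
  else if γ.symbol k = Sum.inr true then sing (ACo γ k)
  else sing (ACo γ (mate γ k))

noncomputable def pivB (γ : Clan p q) (k : Fin (p + q)) : Fin (p + q) :=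
  if k ∈ bsS γ then BCo γ k
  else if γ.symbol k = Sum.inr true then ACo γ k
  else ACo γ (mate γ k)

theorem uB_bs {γ : Clan p q} {k} (h : k ∈ bsS γ) : uB γ k = sing (BCo γ k) := if_pos h
theorem pivB_bs {γ : Clan p q} {k} (h : k ∈ bsS γ) : pivB γ k = BCo γ k := if_pos h

theorem uB_plus {γ : Clan p q} {k} (h : γ.symbol k = Sum.inr true) :
    uB γ k = sing (ACo γ k) := by rw [uB, if_neg (plus_not_bs h), if_pos h]
theorem pivB_plus {γ : Clan p q} {k} (h : γ.symbol k = Sum.inr true) :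
    pivB γ k = ACo γ k := by rw [pivB, if_neg (plus_not_bs h), if_pos h]

theorem uB_cl {γ : Clan p q} {k} (h : isCl γ k) : uB γ k = sing (ACo γ (mate γ k)) := by
  rw [uB, if_neg (cl_not_bs h), if_neg (fun hh => plus_not_cl hh h)]
theorem pivB_cl {γ : Clan p q} {k} (h : isCl γ k) : pivB γ k = ACo γ (mate γ k) := by
  rw [pivB, if_neg (cl_not_bs h), if_neg (fun hh => plus_not_cl hh h)]

theorem cl_mate_tp {γ : Clan p q} {k} (h : isCl γ k) : mate γ k ∈ γ.tplusSet :=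
  op_tp (isOp_mate h).1

theorem h1B (γ : Clan p q) (i : ℕ) : ∀ k ∈ TB γ i, uB γ k (pivB γ k) ≠ 0 := by
  intro k hk
  rcases mem_TB.1 hk with h | ⟨_, h⟩ | ⟨h, _⟩
  · rw [uB_bs h, pivB_bs h, sing_same]; exact one_ne_zero
  · rw [uB_plus h, pivB_plus h, sing_same]; exact one_ne_zero
  · rw [uB_cl h, pivB_cl h, sing_same]; exact one_ne_zero

theorem h2B (γ : Clan p q) (i : ℕ) : ∀ k ∈ TB γ i, ∀ k' ∈ TB γ i, k' ≠ k →
    (fun _ : Fin (p + q) => 0) k' ≤ (fun _ : Fin (p + q) => (0:ℕ)) k →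
    uB γ k' (pivB γ k) = 0 := by
  intro k hk k' hk' hne _
  rcases mem_TB.1 hk with h | ⟨_, h⟩ | ⟨h, _⟩ <;>
    rcases mem_TB.1 hk' with h' | ⟨_, h'⟩ | ⟨h', _⟩
  · rw [pivB_bs h, uB_bs h']; exact sing_ne (BCo_inj h h' hne.symm)
  · rw [pivB_bs h, uB_plus h']; exact sing_ne (Ne.symm (ACo_ne_BCo (plus_tp h') h))
  · rw [pivB_bs h, uB_cl h']; exact sing_ne (Ne.symm (ACo_ne_BCo (cl_mate_tp h') h))
  · rw [pivB_plus h, uB_bs h']; exact sing_ne (ACo_ne_BCo (plus_tp h) h')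
  · rw [pivB_plus h, uB_plus h']
    exact sing_ne (ACo_inj (plus_tp h) (plus_tp h') hne.symm)
  · rw [pivB_plus h, uB_cl h']
    exact sing_ne (ACo_inj (plus_tp h) (cl_mate_tp h') (ne_mate_of_plus h h'))
  · rw [pivB_cl h, uB_bs h']; exact sing_ne (ACo_ne_BCo (cl_mate_tp h) h')
  · rw [pivB_cl h, uB_plus h']
    exact sing_ne (ACo_inj (cl_mate_tp h) (plus_tp h') (Ne.symm (ne_mate_of_plus h' h)))
  · rw [pivB_cl h, uB_cl h']
    exact sing_ne (ACo_inj (cl_mate_tp h) (cl_mate_tp h') (mate_inj_cl h h' hne.symm))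

theorem spanB (γ : Clan p q) (i : ℕ) :
    span ℂ (wv γ '' ↑(T0 (p + q) i)) ⊔ Elast (p + q) q
      = span ℂ (uB γ '' ↑(TB γ i)) := by
  rw [Elast_eq_span, ← Submodule.span_union]
  apply Submodule.span_eq_span
  · rintro x (⟨k, hk, rfl⟩ | ⟨a, ha, rfl⟩)
    · have hki : k.val < i := by
        rw [Finset.mem_coe, mem_T0] at hk; exact hk
      rcases cases4 γ k with h | h | h | h
      · exact subset_span ⟨k, Finset.mem_coe.2 (mem_TB.2 (Or.inr (Or.inl ⟨hki, h⟩))),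
          by rw [uB_plus h, wv_plus h]⟩
      · exact subset_span ⟨k, Finset.mem_coe.2 (mem_TB.2 (Or.inl (minus_bs h))),
          by rw [uB_bs (minus_bs h), wv_minus h]⟩
      · have hclm := isCl_mate h
        have hmem1 : uB γ k ∈ span ℂ (uB γ '' ↑(TB γ i)) :=
          subset_span ⟨k, Finset.mem_coe.2 (mem_TB.2 (Or.inl (op_bs h))), rfl⟩
        have hmem2 : uB γ (mate γ k) ∈ span ℂ (uB γ '' ↑(TB γ i)) :=
          subset_span ⟨mate γ k, Finset.mem_coe.2 (mem_TB.2 (Or.inr (Or.inr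
            ⟨hclm.1, by rw [hclm.2]; exact hki⟩))), rfl⟩
        have heq : wv γ k = uB γ (mate γ k) + uB γ k := by
          rw [wv_op h, uB_bs (op_bs h), uB_cl hclm.1, hclm.2]
        rw [heq]
        exact Submodule.add_mem _ hmem2 hmem1
      · exact subset_span ⟨mate γ k, Finset.mem_coe.2 (mem_TB.2 (Or.inl (cl_mate_bs h))),
          by rw [uB_bs (cl_mate_bs h), wv_cl h]⟩
    · simp only [Set.mem_setOf_eq] at ha
      have ha' : p ≤ a.val := by omega
      obtain ⟨k, hk, rfl⟩ := BCo_surj γ ha'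
      exact subset_span ⟨k, Finset.mem_coe.2 (mem_TB.2 (Or.inl hk)), by rw [uB_bs hk]; rfl⟩
  · rintro x ⟨k, hk, rfl⟩
    rw [Finset.mem_coe] at hk
    rcases mem_TB.1 hk with h | ⟨hki, h⟩ | ⟨h, hmi⟩
    · apply subset_span
      right
      refine ⟨BCo γ k, ?_, by rw [uB_bs h]; rfl⟩
      have := BCo_ge h
      simp only [Set.mem_setOf_eq]
      omega
    · apply subset_span
      left
      exact ⟨k, Finset.mem_coe.2 (mem_T0.2 hki), by rw [uB_plus h, wv_plus h]⟩
    · have hop := (isOp_mate h).1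
      have hmm := (isOp_mate h).2
      have hw : wv γ (mate γ k) ∈ span ℂ ((wv γ '' ↑(T0 (p + q) i)) ∪
          ((fun a => Pi.single a (1:ℂ)) '' {a : Fin (p + q) | p + q - q ≤ a.val})) :=
        subset_span (Or.inl ⟨mate γ k, Finset.mem_coe.2 (mem_T0.2 hmi), rfl⟩)
      have hs : (Pi.single (BCo γ (mate γ k)) (1:ℂ) : Fin (p+q) → ℂ) ∈ span ℂ
          ((wv γ '' ↑(T0 (p + q) i)) ∪
          ((fun a => Pi.single a (1:ℂ)) '' {a : Fin (p + q) | p + q - q ≤ a.val})) := by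
        refine subset_span (Or.inr ⟨BCo γ (mate γ k), ?_, rfl⟩)
        have := BCo_ge (op_bs hop)
        simp only [Set.mem_setOf_eq]
        omega
      have heq : uB γ k = wv γ (mate γ k) - sing (BCo γ (mate γ k)) := by
        rw [uB_cl h, wv_op hop, add_sub_cancel_right]
      rw [heq]
      exact Submodule.sub_mem _ hw hs

theorem cardTB (γ : Clan p q) (i : ℕ) :
    (TB γ i).card = q + (cntP γ i + cntO γ i) := by
  rw [TB, Finset.card_union_of_disjoint, Finset.card_union_of_disjoint, bs_card,
    card_cl_mate_lt]
  · rw [cntP]; omega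
  · rw [Finset.disjoint_left]
    intro a ha hb
    simp only [Finset.mem_filter, Finset.mem_univ, true_and] at hb
    exact plus_not_bs hb.2 ha
  · rw [Finset.disjoint_left]
    intro a ha hb
    simp only [Finset.mem_filter, Finset.mem_univ, true_and, Finset.mem_union] at ha hb
    rcases ha with ha | ha
    · exact cl_not_bs hb.1 ha
    · exact plus_not_cl ha.2 hb.1

theorem caseB (γ : Clan p q) (i : ℕ) (hi : i ≤ p + q) :
    Module.finrank ℂ ↥(span ℂ (wv γ '' ↑(T0 (p + q) i)) ⊓ Elast (p + q) q)
      = γ.cminus i := by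
  have hsum := Submodule.finrank_sup_add_finrank_inf_eq
    (span ℂ (wv γ '' ↑(T0 (p + q) i))) (Elast (p + q) q)
  rw [finrank_flag γ i hi, finrank_Elast (p + q) q (Nat.le_add_left q p),
    spanB γ i, finrank_span_T _ _ (pivB γ) (fun _ => 0) (h1B γ i) (h2B γ i),
    cardTB γ i] at hsum
  have hpart := cnt_partition γ i hi
  have hcm := cminus_eq γ i
  omega

/-! ### Case C : the projection condition -/

theorem projE_apply {n m : ℕ} (x : Fin n → ℂ) (c : Fin n) :
    projE n m x c = if c.val < m then x c else 0 := rfl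

theorem projE_sing {n m : ℕ} (a : Fin n) (ha : a.val < m) :
    projE n m (sing a) = sing a := by
  funext c
  rw [projE_apply]
  by_cases hc : c.val < m
  · rw [if_pos hc]
  · rw [if_neg hc, eq_comm]
    exact sing_ne (fun hh => hc (hh ▸ ha))

theorem projE_sing' {n m : ℕ} (a : Fin n) (ha : ¬ a.val < m) :
    projE n m (sing a) = 0 := by
  funext c
  rw [projE_apply]
  by_cases hc : c.val < m
  · rw [if_pos hc, Pi.zero_apply]
    exact sing_ne (fun hh => ha (hh ▸ hc))
  · rw [if_neg hc, Pi.zero_apply]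

theorem projE_wv_plus {γ : Clan p q} {k} (h : γ.symbol k = Sum.inr true) :
    projE (p + q) p (wv γ k) = wv γ k := by
  rw [wv_plus h]; exact projE_sing _ (ACo_lt (plus_tp h))

theorem projE_wv_minus {γ : Clan p q} {k} (h : γ.symbol k = Sum.inr false) :
    projE (p + q) p (wv γ k) = 0 := by
  rw [wv_minus h]; exact projE_sing' _ (by have := BCo_ge (minus_bs h); omega)

theorem projE_wv_op {γ : Clan p q} {k} (h : isOp γ k) :
    projE (p + q) p (wv γ k) = sing (ACo γ k) := by
  rw [wv_op h, map_add, projE_sing _ (ACo_lt (op_tp h)),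
    projE_sing' _ (by have := BCo_ge (op_bs h); omega), add_zero]

theorem projE_wv_cl {γ : Clan p q} {k} (h : isCl γ k) :
    projE (p + q) p (wv γ k) = 0 := by
  rw [wv_cl h]; exact projE_sing' _ (by have := BCo_ge (cl_mate_bs h); omega)

def TC (γ : Clan p q) (i j : ℕ) : Finset (Fin (p + q)) :=
  Finset.univ.filter (fun k => k.val < j)
    ∪ Finset.univ.filter (fun t => isCl γ t ∧ (mate γ t).val < i ∧ j ≤ t.val)

theorem mem_TC {γ : Clan p q} {i j : ℕ} {k} : k ∈ TC γ i j ↔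
    k.val < j ∨ (isCl γ k ∧ (mate γ k).val < i ∧ j ≤ k.val) := by
  simp [TC]

noncomputable def uC (γ : Clan p q) (j : ℕ) (k : Fin (p + q)) : Fin (p + q) → ℂ :=
  if k.val < j then wv γ k else sing (ACo γ (mate γ k))

noncomputable def pivC (γ : Clan p q) (j : ℕ) (k : Fin (p + q)) : Fin (p + q) :=
  if k.val < j then
    (if γ.symbol k = Sum.inr true then ACo γ k
     else if γ.symbol k = Sum.inr false then BCo γ k
     else if isOp γ k then (if (mate γ k).val < j then ACo γ k else BCo γ k)
     else BCo γ (mate γ k))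
  else ACo γ (mate γ k)

theorem h1C (γ : Clan p q) (i j : ℕ) : ∀ k ∈ TC γ i j, uC γ j k (pivC γ j k) ≠ 0 := by
  intro k hk
  rcases mem_TC.1 hk with hkj | ⟨hcl, hmi, hjk⟩
  · rw [show uC γ j k = wv γ k from if_pos hkj]
    rcases cases4 γ k with h | h | h | h
    · rw [show pivC γ j k = ACo γ k from by rw [pivC, if_pos hkj, if_pos h],
        wv_plus h, sing_same]
      exact one_ne_zero
    · rw [show pivC γ j k = BCo γ k from by
        rw [pivC, if_pos hkj, if_neg (fun hh => plus_not_minus hh h), if_pos h],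
        wv_minus h, sing_same]
      exact one_ne_zero
    · by_cases hmj : (mate γ k).val < j
      · rw [show pivC γ j k = ACo γ k from by
          rw [pivC, if_pos hkj, if_neg (fun hh => plus_not_op hh h),
            if_neg (fun hh => minus_not_op hh h), if_pos h, if_pos hmj],
          wv_op h, Pi.add_apply, sing_same,
          sing_ne (ACo_ne_BCo (op_tp h) (op_bs h))]
        norm_num
      · rw [show pivC γ j k = BCo γ k from by
          rw [pivC, if_pos hkj, if_neg (fun hh => plus_not_op hh h),
            if_neg (fun hh => minus_not_op hh h), if_pos h, if_neg hmj],
          wv_op h, Pi.add_apply, sing_same,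
          sing_ne (Ne.symm (ACo_ne_BCo (op_tp h) (op_bs h)))]
        norm_num
    · rw [show pivC γ j k = BCo γ (mate γ k) from by
        rw [pivC, if_pos hkj, if_neg (fun hh => plus_not_cl hh h),
          if_neg (fun hh => minus_not_cl hh h), if_neg (fun hh => op_not_cl hh h)],
        wv_cl h, sing_same]
      exact one_ne_zero
  · rw [show uC γ j k = sing (ACo γ (mate γ k)) from if_neg (not_lt.2 hjk),
      show pivC γ j k = ACo γ (mate γ k) from if_neg (not_lt.2 hjk), sing_same]
    exact one_ne_zero

theorem h2C (γ : Clan p q) (i j : ℕ) : ∀ k ∈ TC γ i j, ∀ k' ∈ TC γ i j, k' ≠ k →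
    rk0 γ k' ≤ rk0 γ k → uC γ j k' (pivC γ j k) = 0 := by
  intro k hk k' hk' hne hrk
  rcases mem_TC.1 hk with hkj | ⟨hcl, hmi, hjk⟩
  · by_cases hOp : isOp γ k ∧ ¬ (mate γ k).val < j
    · -- pivot is `BCo k`
      have hp : pivC γ j k = BCo γ k := by
        rw [pivC, if_pos hkj, if_neg (fun hh => plus_not_op hh hOp.1),
          if_neg (fun hh => minus_not_op hh hOp.1), if_pos hOp.1, if_neg hOp.2]
      rw [hp]
      rcases mem_TC.1 hk' with hk'j | ⟨hcl', hmi', hjk'⟩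
      · rw [show uC γ j k' = wv γ k' from if_pos hk'j]
        rcases cases4 γ k' with h' | h' | h' | h'
        · rw [wv_plus h']
          exact sing_ne (Ne.symm (ACo_ne_BCo (plus_tp h') (op_bs hOp.1)))
        · rw [wv_minus h']
          exact sing_ne (BCo_inj (op_bs hOp.1) (minus_bs h') hne.symm)
        · rw [wv_op h', Pi.add_apply,
            sing_ne (Ne.symm (ACo_ne_BCo (op_tp h') (op_bs hOp.1))),
            sing_ne (BCo_inj (op_bs hOp.1) (op_bs h') hne.symm), add_zero]
        · rw [wv_cl h']
          have hne2 : k ≠ mate γ k' := by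
            intro hh
            have h3 : mate γ k = k' := by rw [hh, (isOp_mate h').2]
            apply hOp.2
            rw [h3]
            exact hk'j
          exact sing_ne (BCo_inj (op_bs hOp.1) (cl_mate_bs h') hne2)
      · rw [show uC γ j k' = sing (ACo γ (mate γ k')) from if_neg (not_lt.2 hjk')]
        exact sing_ne (Ne.symm (ACo_ne_BCo (cl_mate_tp hcl') (op_bs hOp.1)))
    · -- pivot is `piv0 k`
      have hp : pivC γ j k = piv0 γ k := by
        rcases cases4 γ k with h | h | h | h
        · rw [pivC, if_pos hkj, if_pos h, piv0_plus h]
        · rw [pivC, if_pos hkj, if_neg (fun hh => plus_not_minus hh h), if_pos h,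
            piv0_minus h]
        · have hmj : (mate γ k).val < j := by
            by_contra hc; exact hOp ⟨h, hc⟩
          rw [pivC, if_pos hkj, if_neg (fun hh => plus_not_op hh h),
            if_neg (fun hh => minus_not_op hh h), if_pos h, if_pos hmj, piv0_op h]
        · rw [pivC, if_pos hkj, if_neg (fun hh => plus_not_cl hh h),
            if_neg (fun hh => minus_not_cl hh h), if_neg (fun hh => op_not_cl hh h),
            piv0_cl h]
      rw [hp]
      rcases mem_TC.1 hk' with hk'j | ⟨hcl', hmi', hjk'⟩
      · rw [show uC γ j k' = wv γ k' from if_pos hk'j]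
        exact wv_piv0_zero γ k k' hne hrk
      · rw [show uC γ j k' = sing (ACo γ (mate γ k')) from if_neg (not_lt.2 hjk')]
        rcases cases4 γ k with h | h | h | h
        · rw [piv0_plus h]
          exact sing_ne (ACo_inj (plus_tp h) (cl_mate_tp hcl') (ne_mate_of_plus h hcl'))
        · rw [piv0_minus h]
          exact sing_ne (Ne.symm (ACo_ne_BCo (cl_mate_tp hcl') (minus_bs h)))
        · rw [piv0_op h]
          have hmj : (mate γ k).val < j := by
            by_contra hc; exact hOp ⟨h, hc⟩
          have hne2 : k ≠ mate γ k' := by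
            intro hh
            have h3 : mate γ k = k' := by rw [hh, (isOp_mate hcl').2]
            rw [h3] at hmj
            omega
          exact sing_ne (ACo_inj (op_tp h) (cl_mate_tp hcl') hne2)
        · rw [piv0_cl h]
          exact sing_ne (Ne.symm (ACo_ne_BCo (cl_mate_tp hcl') (cl_mate_bs h)))
  · -- k is an extra index : pivot is `ACo (mate k)`
    rw [show pivC γ j k = ACo γ (mate γ k) from if_neg (not_lt.2 hjk)]
    rcases mem_TC.1 hk' with hk'j | ⟨hcl', hmi', hjk'⟩
    · rw [show uC γ j k' = wv γ k' from if_pos hk'j]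
      rcases cases4 γ k' with h' | h' | h' | h'
      · rw [wv_plus h']
        exact sing_ne (ACo_inj (cl_mate_tp hcl) (plus_tp h')
          (Ne.symm (ne_mate_of_plus h' hcl)))
      · rw [wv_minus h']
        exact sing_ne (ACo_ne_BCo (cl_mate_tp hcl) (minus_bs h'))
      · exfalso
        rw [rk0, rk0, if_pos h', if_neg (fun hh => op_not_cl hh hcl)] at hrk
        omega
      · rw [wv_cl h']
        exact sing_ne (ACo_ne_BCo (cl_mate_tp hcl) (cl_mate_bs h'))
    · rw [show uC γ j k' = sing (ACo γ (mate γ k')) from if_neg (not_lt.2 hjk')]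
      exact sing_ne (ACo_inj (cl_mate_tp hcl) (cl_mate_tp hcl')
        (mate_inj_cl hcl hcl' hne.symm))

theorem spanC (γ : Clan p q) (i j : ℕ) (hij : i < j) :
    (span ℂ (wv γ '' ↑(T0 (p + q) i))).map (projE (p + q) p)
      ⊔ span ℂ (wv γ '' ↑(T0 (p + q) j))
      = span ℂ (uC γ j '' ↑(TC γ i j)) := by
  rw [Submodule.map_span, ← Submodule.span_union]
  apply Submodule.span_eq_span
  · rintro x (⟨y, ⟨k, hk, rfl⟩, rfl⟩ | ⟨k, hk, rfl⟩)
    · have hki : k.val < i := mem_T0.1 (Finset.mem_coe.1 hk)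
      have hkj : k.val < j := lt_trans hki hij
      rcases cases4 γ k with h | h | h | h
      · rw [projE_wv_plus h]
        exact subset_span ⟨k, Finset.mem_coe.2 (mem_TC.2 (Or.inl hkj)),
          if_pos hkj⟩
      · rw [projE_wv_minus h]; exact zero_mem _
      · rw [projE_wv_op h]
        have hclm := isCl_mate h
        by_cases hmj : (mate γ k).val < j
        · have heq : sing (ACo γ k) = uC γ j k - uC γ j (mate γ k) := by
            rw [show uC γ j k = wv γ k from if_pos hkj,
              show uC γ j (mate γ k) = wv γ (mate γ k) from if_pos hmj,
              wv_op h, wv_cl hclm.1, hclm.2, add_sub_cancel_right]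
          rw [heq]
          exact Submodule.sub_mem _
            (subset_span ⟨k, Finset.mem_coe.2 (mem_TC.2 (Or.inl hkj)), rfl⟩)
            (subset_span ⟨mate γ k, Finset.mem_coe.2 (mem_TC.2 (Or.inl hmj)), rfl⟩)
        · refine subset_span ⟨mate γ k, Finset.mem_coe.2 (mem_TC.2 (Or.inr
            ⟨hclm.1, by rw [hclm.2]; exact hki, le_of_not_gt hmj⟩)), ?_⟩
          rw [show uC γ j (mate γ k) = sing (ACo γ (mate γ (mate γ k))) from
            if_neg hmj, hclm.2]
      · rw [projE_wv_cl h]; exact zero_mem _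
    · have hkj : k.val < j := mem_T0.1 (Finset.mem_coe.1 hk)
      exact subset_span ⟨k, Finset.mem_coe.2 (mem_TC.2 (Or.inl hkj)), if_pos hkj⟩
  · rintro x ⟨k, hk, rfl⟩
    rcases mem_TC.1 (Finset.mem_coe.1 hk) with hkj | ⟨hcl, hmi, hjk⟩
    · rw [show uC γ j k = wv γ k from if_pos hkj]
      exact subset_span (Or.inr ⟨k, Finset.mem_coe.2 (mem_T0.2 hkj), rfl⟩)
    · have hop := (isOp_mate hcl).1
      have heq : uC γ j k = projE (p + q) p (wv γ (mate γ k)) := by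
        rw [show uC γ j k = sing (ACo γ (mate γ k)) from if_neg (not_lt.2 hjk),
          projE_wv_op hop]
      rw [heq]
      exact subset_span (Or.inl ⟨wv γ (mate γ k),
        ⟨mate γ k, Finset.mem_coe.2 (mem_T0.2 hmi), rfl⟩, rfl⟩)

theorem cardTC (γ : Clan p q) (i j : ℕ) (hj : j ≤ p + q) :
    (TC γ i j).card = j + γ.cpair i j := by
  rw [TC, Finset.card_union_of_disjoint, card_filter_val_lt _ _ hj, card_cl_cpair]
  rw [Finset.disjoint_left]
  intro a ha hb
  simp only [Finset.mem_filter, Finset.mem_univ, true_and] at ha hb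
  omega

theorem caseC (γ : Clan p q) (i j : ℕ) (hij : i < j) (hj : j ≤ p + q) :
    Module.finrank ℂ ↥((span ℂ (wv γ '' ↑(T0 (p + q) i))).map (projE (p + q) p)
      ⊔ span ℂ (wv γ '' ↑(T0 (p + q) j))) = j + γ.cpair i j := by
  rw [spanC γ i j hij,
    finrank_span_T _ _ (pivC γ j) (rk0 γ) (h1C γ i j) (h2C γ i j), cardTC γ i j hj]
end ClanProof

/-- For every `(p,q)`-clan `γ`, the set `Q_γ` is nonempty:
some complete flag satisfies all the defining conditions of `Q_γ`. -/
theorem Qclan_nonempty {p q : ℕ} (hn : 1 ≤ p + q) (γ : Clan p q) :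
    ∃ Fl : CompleteFlag (p + q), MemQ γ Fl := by
  classical
  refine ⟨⟨fun i => Submodule.span ℂ (ClanProof.wv γ '' ↑(ClanProof.T0 (p + q) i.val)),
    ?_, ?_⟩, ?_, ?_⟩
  · intro a b hab
    apply Submodule.span_mono
    apply Set.image_mono
    intro k hk
    rw [Finset.mem_coe, ClanProof.mem_T0] at hk ⊢
    exact lt_of_lt_of_le hk (Fin.le_def.1 hab)
  · intro i
    exact ClanProof.finrank_flag γ i.val (Nat.lt_succ_iff.mp i.isLt)
  · intro i h1 hi
    exact ⟨ClanProof.caseA γ i hi, ClanProof.caseB γ i hi⟩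
  · intro i j h1 hij hj
    exact ClanProof.caseC γ i j hij hj
end
end

section
/- Let p,q ≥ 0 and n = p+q ≥ 1. Every complete flag F in ℂⁿ belongs to Q_γ for exactly one (p,q)-clan γ; that is, the sets Q_γ, as γ ranges over all (p,q)-clans, partition the set of complete flags in ℂⁿ. -/
open Finset Module

noncomputable section

/-! ### Auxiliary development -/

namespace QclanProof

open Submodule

variable {n : ℕ}

/-- The flag as a function `ℕ → Submodule`, clamped at `n`. -/
def FF (Fl : CompleteFlag n) (i : ℕ) : Submodule ℂ (Fin n → ℂ) :=
  Fl.F ⟨min i n, by omega⟩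

lemma FF_mono (Fl : CompleteFlag n) : Monotone (FF Fl) := by
  intro i j hij
  exact Fl.mono (by simp [Fin.mk_le_mk]; omega)

lemma finrank_FF (Fl : CompleteFlag n) (i : ℕ) : finrank ℂ (FF Fl i) = min i n :=
  Fl.finrank_eq _

lemma FF_eq (Fl : CompleteFlag n) (i : ℕ) (hi : i ≤ n) :
    FF Fl i = Fl.F ⟨i, by omega⟩ := by
  unfold FF; congr 1; simp [Fin.ext_iff]; omega

lemma FF_zero (Fl : CompleteFlag n) : FF Fl 0 = ⊥ := by
  rw [← Submodule.finrank_eq_zero (R := ℂ)]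
  simp [finrank_FF]

lemma finrank_pi_n : finrank ℂ (Fin n → ℂ) = n := by
  simp [Module.finrank_fintype_fun_eq_card]

lemma FF_top (Fl : CompleteFlag n) : FF Fl n = ⊤ := by
  apply Submodule.eq_top_of_finrank_eq
  rw [finrank_FF, finrank_pi_n]; omega

lemma finrank_sup_span {V : Type*} [AddCommGroup V] [Module ℂ V] [FiniteDimensional ℂ V]
    (A : Submodule ℂ V) (v : V) (hv : v ∉ A) :
    finrank ℂ ↥(A ⊔ ℂ ∙ v) = finrank ℂ A + 1 := by
  have hv0 : v ≠ 0 := fun h => hv (h ▸ A.zero_mem)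
  have hinf : A ⊓ (ℂ ∙ v) = ⊥ := by
    rw [eq_bot_iff]
    rintro x hx
    have hxA : x ∈ A := hx.1
    have hxv : x ∈ (ℂ ∙ v) := hx.2
    rw [Submodule.mem_span_singleton] at hxv
    obtain ⟨c, rfl⟩ := hxv
    rcases eq_or_ne c 0 with rfl | hc
    · simp
    · exact absurd (by simpa [hc] using A.smul_mem c⁻¹ hxA) hv
  have := Submodule.finrank_sup_add_finrank_inf_eq A (ℂ ∙ v)
  rw [hinf, finrank_bot, finrank_span_singleton hv0] at this
  omega

lemma exists_step (Fl : CompleteFlag n) (i : ℕ) (hi : i < n) :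
    ∃ v, v ∈ FF Fl (i + 1) ∧ v ∉ FF Fl i ∧ FF Fl (i + 1) = FF Fl i ⊔ ℂ ∙ v := by
  have hle : FF Fl i ≤ FF Fl (i + 1) := FF_mono Fl (by omega)
  have hlt : FF Fl i < FF Fl (i + 1) := by
    refine lt_of_le_of_ne hle fun h => ?_
    have := finrank_FF Fl i
    rw [h, finrank_FF] at this
    omega
  obtain ⟨v, hv1, hv2⟩ := SetLike.exists_of_lt hlt
  refine ⟨v, hv1, hv2, ?_⟩
  symm
  apply Submodule.eq_of_le_of_finrank_le
  · exact sup_le hle ((Submodule.span_singleton_le_iff_mem _ _).2 hv1)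
  · rw [finrank_sup_span _ v hv2, finrank_FF, finrank_FF]
    omega

/-- One-step bound for intersection dimensions. -/
lemma finrank_inf_succ_le (Fl : CompleteFlag n) (W : Submodule ℂ (Fin n → ℂ))
    (k : ℕ) (hk : k < n) :
    finrank ℂ ↥(FF Fl (k + 1) ⊓ W) ≤ finrank ℂ ↥(FF Fl k ⊓ W) + 1 := by
  have h1 := Submodule.finrank_sup_add_finrank_inf_eq (FF Fl (k + 1) ⊓ W) (FF Fl k)
  have h2 : (FF Fl (k + 1) ⊓ W) ⊓ FF Fl k = FF Fl k ⊓ W := by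
    rw [inf_comm (FF Fl (k+1)) W, inf_assoc]
    rw [inf_eq_right.2 (FF_mono Fl (by omega : k ≤ k + 1))]
    rw [inf_comm]
  have h3 : finrank ℂ ↥((FF Fl (k + 1) ⊓ W) ⊔ FF Fl k) ≤ k + 1 := by
    have : (FF Fl (k + 1) ⊓ W) ⊔ FF Fl k ≤ FF Fl (k + 1) :=
      sup_le inf_le_left (FF_mono Fl (by omega))
    calc finrank ℂ ↥((FF Fl (k + 1) ⊓ W) ⊔ FF Fl k) ≤ finrank ℂ ↥(FF Fl (k + 1)) :=
          Submodule.finrank_mono this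
      _ = k + 1 := by rw [finrank_FF]; omega
  have h4 : finrank ℂ ↥(FF Fl k) = k := by rw [finrank_FF]; omega
  rw [h2, h4] at h1
  omega

lemma finrank_inf_mono (Fl : CompleteFlag n) (W : Submodule ℂ (Fin n → ℂ)) (k : ℕ) :
    finrank ℂ ↥(FF Fl k ⊓ W) ≤ finrank ℂ ↥(FF Fl (k + 1) ⊓ W) :=
  Submodule.finrank_mono (inf_le_inf_right W (FF_mono Fl (by omega)))

/-- The jump criterion. -/
lemma jump_iff (Fl : CompleteFlag n) (W : Submodule ℂ (Fin n → ℂ)) (k : ℕ) (hk : k < n) :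
    finrank ℂ ↥(FF Fl (k + 1) ⊓ W) = finrank ℂ ↥(FF Fl k ⊓ W) + 1 ↔
      ∃ v, v ∈ FF Fl (k + 1) ∧ v ∈ W ∧ v ∉ FF Fl k := by
  constructor
  · intro h
    have hle : FF Fl k ⊓ W ≤ FF Fl (k + 1) ⊓ W :=
      inf_le_inf_right W (FF_mono Fl (by omega))
    have hlt : FF Fl k ⊓ W < FF Fl (k + 1) ⊓ W :=
      lt_of_le_of_ne hle fun he => by rw [he] at h; omega
    obtain ⟨v, hv1, hv2⟩ := SetLike.exists_of_lt hlt
    exact ⟨v, hv1.1, hv1.2, fun hv => hv2 ⟨hv, hv1.2⟩⟩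
  · rintro ⟨v, hv1, hv2, hv3⟩
    have hlt : FF Fl k ⊓ W < FF Fl (k + 1) ⊓ W := by
      refine lt_of_le_of_ne (inf_le_inf_right W (FF_mono Fl (by omega))) fun he => ?_
      have : v ∈ FF Fl k ⊓ W := he ▸ (Submodule.mem_inf.2 ⟨hv1, hv2⟩)
      exact hv3 this.1
    have := Submodule.finrank_lt_finrank_of_lt hlt
    have := finrank_inf_succ_le Fl W k hk
    omega

/-! ### The subspaces `E`, `Ẽ` and the projection -/

lemma mem_Efirst {j : ℕ} (v : Fin n → ℂ) :
    v ∈ Efirst n j ↔ ∀ k : Fin n, j ≤ k.val → v k = 0 := by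
  simp [Efirst, Submodule.mem_iInf, LinearMap.mem_ker]

lemma mem_Elast {j : ℕ} (v : Fin n → ℂ) :
    v ∈ Elast n j ↔ ∀ k : Fin n, k.val < n - j → v k = 0 := by
  simp [Elast, Submodule.mem_iInf, LinearMap.mem_ker]

variable {p q : ℕ}

lemma projE_apply (v : Fin n → ℂ) (k : Fin n) :
    projE n p v k = if k.val < p then v k else 0 := rfl

lemma projE_mem_Efirst (v : Fin n → ℂ) : projE n p v ∈ Efirst n p := by
  rw [mem_Efirst]
  intro k hk
  rw [projE_apply, if_neg (by omega)]

lemma projE_eq_self_of_mem {v : Fin n → ℂ} (hv : v ∈ Efirst n p) : projE n p v = v := by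
  rw [mem_Efirst] at hv
  funext k
  rw [projE_apply]
  by_cases h : k.val < p
  · rw [if_pos h]
  · rw [if_neg h, hv k (by omega)]

lemma projE_eq_zero_iff {v : Fin (p + q) → ℂ} :
    projE (p + q) p v = 0 ↔ v ∈ Elast (p + q) q := by
  rw [mem_Elast]
  constructor
  · intro h k hk
    have := congrFun h k
    rw [projE_apply, if_pos (by omega)] at this
    exact this
  · intro h
    funext k
    simp only [projE_apply, Pi.zero_apply]
    by_cases hc : k.val < p
    · rw [if_pos hc]; exact h k (by omega)
    · rw [if_neg hc]

lemma finrank_Efirst (hpq : p ≤ n) : finrank ℂ ↥(Efirst n p) = p := by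
  classical
  set L : (Fin n → ℂ) →ₗ[ℂ] ({k : Fin n // p ≤ k.val} → ℂ) :=
    LinearMap.funLeft ℂ ℂ Subtype.val with hL
  have hker : LinearMap.ker L = Efirst n p := by
    ext v
    rw [LinearMap.mem_ker, mem_Efirst]
    constructor
    · intro h k hk
      exact congrFun h ⟨k, hk⟩
    · intro h
      funext k
      exact h k.val k.2
  have hsurj : Function.Surjective L :=
    LinearMap.funLeft_surjective_of_injective ℂ ℂ _ Subtype.val_injective
  have hrank := LinearMap.finrank_range_add_finrank_ker L
  rw [hker, LinearMap.range_eq_top.2 hsurj, finrank_top] at hrank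
  have hcard : finrank ℂ ({k : Fin n // p ≤ k.val} → ℂ) = n - p := by
    rw [Module.finrank_fintype_fun_eq_card, Fintype.card_subtype]
    have h1 : (Finset.univ.filter fun k : Fin n => p ≤ k.val).card
        = ((Finset.range n).filter fun k => p ≤ k).card := by
      apply Finset.card_bij (fun k _ => k.val)
      · intro a ha; simp at ha ⊢; exact ha
      · intro a _ b _ h; exact Fin.ext h
      · intro b hb; simp at hb; exact ⟨⟨b, hb.1⟩, by simp [hb.2], rfl⟩
    have h2 : ((Finset.range n).filter fun k => p ≤ k) = Finset.Ico p n := by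
      ext x; simp [Finset.mem_Ico]; omega
    rw [h1, h2, Nat.card_Ico]
  rw [hcard, finrank_pi_n] at hrank
  omega

lemma finrank_Elast (hpq : q ≤ n) : finrank ℂ ↥(Elast n q) = q := by
  classical
  set L : (Fin n → ℂ) →ₗ[ℂ] ({k : Fin n // k.val < n - q} → ℂ) :=
    LinearMap.funLeft ℂ ℂ Subtype.val with hL
  have hker : LinearMap.ker L = Elast n q := by
    ext v
    rw [LinearMap.mem_ker, mem_Elast]
    constructor
    · intro h k hk
      exact congrFun h ⟨k, hk⟩
    · intro h
      funext k
      exact h k.val k.2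
  have hsurj : Function.Surjective L :=
    LinearMap.funLeft_surjective_of_injective ℂ ℂ _ Subtype.val_injective
  have hrank := LinearMap.finrank_range_add_finrank_ker L
  rw [hker, LinearMap.range_eq_top.2 hsurj, finrank_top] at hrank
  have hcard : finrank ℂ ({k : Fin n // k.val < n - q} → ℂ) = n - q := by
    rw [Module.finrank_fintype_fun_eq_card, Fintype.card_subtype]
    have h1 : (Finset.univ.filter fun k : Fin n => k.val < n - q).card
        = ((Finset.range n).filter fun k => k < n - q).card := by
      apply Finset.card_bij (fun k _ => k.val)
      · intro a ha; simp at ha ⊢; exact ha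
      · intro a _ b _ h; exact Fin.ext h
      · intro b hb; simp at hb; exact ⟨⟨b, by omega⟩, by simp [hb], rfl⟩
    have h2 : ((Finset.range n).filter fun k => k < n - q) = Finset.range (n - q) := by
      ext x; simp; omega
    rw [h1, h2, Finset.card_range]
  rw [hcard, finrank_pi_n] at hrank
  omega
/-! ### Counting helper -/

lemma card_filter_lt_succ {m : ℕ} (P : Fin m → Prop) [DecidablePred P] (k : ℕ) (hk : k < m) :
    (univ.filter fun x : Fin m => x.val < k + 1 ∧ P x).card
      = (univ.filter fun x : Fin m => x.val < k ∧ P x).card + if P ⟨k, hk⟩ then 1 else 0 := by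
  by_cases hP : P ⟨k, hk⟩
  · rw [if_pos hP]
    have heq : (univ.filter fun x : Fin m => x.val < k + 1 ∧ P x)
        = insert ⟨k, hk⟩ (univ.filter fun x : Fin m => x.val < k ∧ P x) := by
      ext x
      simp only [Finset.mem_filter, Finset.mem_univ, true_and, Finset.mem_insert]
      constructor
      · rintro ⟨h1, h2⟩
        rcases Nat.lt_succ_iff_lt_or_eq.1 h1 with h | h
        · exact Or.inr ⟨h, h2⟩
        · exact Or.inl (Fin.ext h)
      · rintro (rfl | ⟨h1, h2⟩)
        · exact ⟨by simp, hP⟩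
        · exact ⟨by omega, h2⟩
    rw [heq, Finset.card_insert_of_notMem (by simp)]
  · rw [if_neg hP, add_zero]
    congr 1
    ext x
    simp only [Finset.mem_filter, Finset.mem_univ, true_and]
    constructor
    · rintro ⟨h1, h2⟩
      refine ⟨?_, h2⟩
      rcases Nat.lt_succ_iff_lt_or_eq.1 h1 with h | h
      · exact h
      · exact absurd (by have hx : x = ⟨k, hk⟩ := Fin.ext h; rwa [hx] at h2) hP
    · rintro ⟨h1, h2⟩; exact ⟨by omega, h2⟩

/-! ### The jump functions of a flag -/

section Main

variable (p q : ℕ) (Fl : CompleteFlag (p + q))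

def aF (i : ℕ) : ℕ := finrank ℂ ↥(FF Fl i ⊓ Efirst (p + q) p)

def bF (i : ℕ) : ℕ := finrank ℂ ↥(FF Fl i ⊓ Elast (p + q) q)

def Da (k : ℕ) : Prop := aF p q Fl (k + 1) = aF p q Fl k + 1

def Db (k : ℕ) : Prop := bF p q Fl (k + 1) = bF p q Fl k + 1

instance : DecidablePred (Da p q Fl) := fun k => by unfold Da; infer_instance

instance : DecidablePred (Db p q Fl) := fun k => by unfold Db; infer_instance

lemma aF_zero : aF p q Fl 0 = 0 := by
  unfold aF; rw [FF_zero, bot_inf_eq, finrank_bot]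

lemma bF_zero : bF p q Fl 0 = 0 := by
  unfold bF; rw [FF_zero, bot_inf_eq, finrank_bot]

lemma aF_last : aF p q Fl (p + q) = p := by
  unfold aF; rw [FF_top, top_inf_eq, finrank_Efirst (by omega)]

lemma bF_last : bF p q Fl (p + q) = q := by
  unfold bF; rw [FF_top, top_inf_eq, finrank_Elast (by omega)]

lemma aF_succ (k : ℕ) (hk : k < p + q) :
    aF p q Fl (k + 1) = aF p q Fl k + if Da p q Fl k then 1 else 0 := by
  by_cases h : Da p q Fl k
  · rw [if_pos h]; exact h
  · rw [if_neg h, add_zero]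
    have h1 := finrank_inf_mono Fl (Efirst (p + q) p) k
    have h2 := finrank_inf_succ_le Fl (Efirst (p + q) p) k hk
    unfold Da aF at *
    omega

lemma bF_succ (k : ℕ) (hk : k < p + q) :
    bF p q Fl (k + 1) = bF p q Fl k + if Db p q Fl k then 1 else 0 := by
  by_cases h : Db p q Fl k
  · rw [if_pos h]; exact h
  · rw [if_neg h, add_zero]
    have h1 := finrank_inf_mono Fl (Elast (p + q) q) k
    have h2 := finrank_inf_succ_le Fl (Elast (p + q) q) k hk
    unfold Db bF at *
    omega

lemma Da_iff (k : ℕ) (hk : k < p + q) :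
    Da p q Fl k ↔ ∃ v, v ∈ FF Fl (k + 1) ∧ v ∈ Efirst (p + q) p ∧ v ∉ FF Fl k :=
  jump_iff Fl (Efirst (p + q) p) k hk

lemma Db_iff (k : ℕ) (hk : k < p + q) :
    Db p q Fl k ↔ ∃ v, v ∈ FF Fl (k + 1) ∧ v ∈ Elast (p + q) q ∧ v ∉ FF Fl k :=
  jump_iff Fl (Elast (p + q) q) k hk

lemma aF_eq_card (i : ℕ) (hi : i ≤ p + q) :
    aF p q Fl i
      = (univ.filter fun k : Fin (p + q) => k.val < i ∧ Da p q Fl k.val).card := by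
  induction i with
  | zero => simp [aF_zero]
  | succ m ih =>
      rw [aF_succ p q Fl m (by omega), ih (by omega),
        card_filter_lt_succ (fun k : Fin (p + q) => Da p q Fl k.val) m (by omega)]

lemma bF_eq_card (i : ℕ) (hi : i ≤ p + q) :
    bF p q Fl i
      = (univ.filter fun k : Fin (p + q) => k.val < i ∧ Db p q Fl k.val).card := by
  induction i with
  | zero => simp [bF_zero]
  | succ m ih =>
      rw [bF_succ p q Fl m (by omega), ih (by omega),
        card_filter_lt_succ (fun k : Fin (p + q) => Db p q Fl k.val) m (by omega)]

end Main
/-! ### The matching set `Sset` and minimal index `sI` -/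

section Main2

variable (p q : ℕ) (Fl : CompleteFlag (p + q))

def Sset (k : ℕ) : Set ℕ :=
  {i | FF Fl (k + 1) ≤ (FF Fl i).map (projE (p + q) p) ⊔ FF Fl k}

def sI (k : ℕ) : ℕ := sInf (Sset p q Fl k)

lemma Sset_mono (k : ℕ) {i i' : ℕ} (h : i ≤ i') (hi : i ∈ Sset p q Fl k) :
    i' ∈ Sset p q Fl k :=
  le_trans (show FF Fl (k + 1) ≤ (FF Fl i).map (projE (p + q) p) ⊔ FF Fl k from hi) (sup_le_sup_right (Submodule.map_mono (FF_mono Fl h)) _)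

lemma span_step (i : ℕ) (hi : i < p + q) (v : Fin (p + q) → ℂ)
    (h1 : v ∈ FF Fl (i + 1)) (h2 : v ∉ FF Fl i) :
    FF Fl (i + 1) = FF Fl i ⊔ ℂ ∙ v := by
  symm
  apply Submodule.eq_of_le_of_finrank_le
  · exact sup_le (FF_mono Fl (by omega)) ((Submodule.span_singleton_le_iff_mem _ _).2 h1)
  · rw [finrank_sup_span _ v h2, finrank_FF, finrank_FF]; omega

lemma closer_mem_Sset (k : ℕ) (hk : k < p + q) (hc : Da p q Fl k ∧ Db p q Fl k) :
    k ∈ Sset p q Fl k := by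
  obtain ⟨e, he1, he2, he3⟩ := (Da_iff p q Fl k hk).1 hc.1
  obtain ⟨f, hf1, hf2, hf3⟩ := (Db_iff p q Fl k hk).1 hc.2
  have hspanf : FF Fl (k + 1) = FF Fl k ⊔ ℂ ∙ f := span_step p q Fl k hk f hf1 hf3
  have he' : e ∈ FF Fl k ⊔ ℂ ∙ f := hspanf ▸ he1
  rw [Submodule.mem_sup] at he'
  obtain ⟨w, hw, z, hz, hsum⟩ := he'
  rw [Submodule.mem_span_singleton] at hz
  obtain ⟨c, rfl⟩ := hz
  have hπf : projE (p + q) p f = 0 := projE_eq_zero_iff.2 hf2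
  have hπe : projE (p + q) p e = e := projE_eq_self_of_mem he2
  have hew : e = projE (p + q) p w := by
    have := congrArg (projE (p + q) p) hsum
    rw [map_add, map_smul, hπf, smul_zero, add_zero] at this
    rw [this, hπe]
  have hspane : FF Fl (k + 1) = FF Fl k ⊔ ℂ ∙ e := span_step p q Fl k hk e he1 he3
  show FF Fl (k + 1) ≤ _
  rw [hspane]
  apply sup_le le_sup_right
  rw [Submodule.span_singleton_le_iff_mem]
  exact Submodule.mem_sup_left (hew ▸ Submodule.mem_map_of_mem hw)

lemma zero_not_mem_Sset (k : ℕ) (hk : k < p + q) : 0 ∉ Sset p q Fl k := by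
  intro h
  have : FF Fl (k + 1) ≤ FF Fl k := by
    have h0 : (FF Fl 0).map (projE (p + q) p) = ⊥ := by rw [FF_zero, Submodule.map_bot]
    rw [Sset, Set.mem_setOf_eq, h0, bot_sup_eq] at h
    exact h
  have := Submodule.finrank_mono (R := ℂ) this
  rw [finrank_FF, finrank_FF] at this
  omega

lemma sI_mem (k : ℕ) (hk : k < p + q) (hc : Da p q Fl k ∧ Db p q Fl k) :
    sI p q Fl k ∈ Sset p q Fl k :=
  Nat.sInf_mem ⟨k, closer_mem_Sset p q Fl k hk hc⟩

lemma sI_le (k : ℕ) (hk : k < p + q) (hc : Da p q Fl k ∧ Db p q Fl k) :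
    sI p q Fl k ≤ k :=
  Nat.sInf_le (closer_mem_Sset p q Fl k hk hc)

lemma sI_pos (k : ℕ) (hk : k < p + q) (hc : Da p q Fl k ∧ Db p q Fl k) :
    1 ≤ sI p q Fl k := by
  rcases Nat.eq_zero_or_pos (sI p q Fl k) with h | h
  · exact absurd (h ▸ sI_mem p q Fl k hk hc) (zero_not_mem_Sset p q Fl k hk)
  · exact h

/-- **Key lemma**: membership in `Sset k` detects closedness. -/
lemma mem_Sset_iff (i k : ℕ) (hi1 : 1 ≤ i) (hik : i ≤ k) (hk : k < p + q) :
    i ∈ Sset p q Fl k ↔ (Da p q Fl k ∧ Db p q Fl k) ∧ sI p q Fl k ≤ i := by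
  constructor
  · intro hin
    obtain ⟨v, hv1, hv2, hvspan⟩ := exists_step Fl k hk
    have hv : v ∈ (FF Fl i).map (projE (p + q) p) ⊔ FF Fl k := hin hv1
    rw [Submodule.mem_sup] at hv
    obtain ⟨y, hy, w, hw, hsum⟩ := hv
    rw [Submodule.mem_map] at hy
    obtain ⟨x, hx, rfl⟩ := hy
    set e := projE (p + q) p x with he_def
    have he2 : e ∈ Efirst (p + q) p := projE_mem_Efirst x
    have he1 : e ∈ FF Fl (k + 1) := by
      have : e = v - w := by rw [← hsum]; abel
      rw [this]
      exact sub_mem hv1 (FF_mono Fl (by omega) hw)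
    have he3 : e ∉ FF Fl k := fun h =>
      hv2 (by rw [← hsum]; exact add_mem h hw)
    have hDa : Da p q Fl k := (Da_iff p q Fl k hk).2 ⟨e, he1, he2, he3⟩
    set f := x - e with hf_def
    have hπe : projE (p + q) p e = e := projE_eq_self_of_mem he2
    have hf2 : f ∈ Elast (p + q) q := by
      rw [← projE_eq_zero_iff]
      rw [hf_def, map_sub, hπe, he_def, sub_self]
    have hxk : x ∈ FF Fl k := FF_mono Fl hik hx
    have hf1 : f ∈ FF Fl (k + 1) := sub_mem (FF_mono Fl (by omega) hxk) he1
    have hf3 : f ∉ FF Fl k := by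
      intro h
      exact he3 (by have : e = x - f := by rw [hf_def]; abel
                    rw [this]; exact sub_mem hxk h)
    have hDb : Db p q Fl k := (Db_iff p q Fl k hk).2 ⟨f, hf1, hf2, hf3⟩
    exact ⟨⟨hDa, hDb⟩, Nat.sInf_le hin⟩
  · rintro ⟨hc, hle⟩
    exact Sset_mono p q Fl k hle (sI_mem p q Fl k hk hc)

/-- The matched position is an "opener": no jumps there. -/
lemma opener_of_closer (k : ℕ) (hk : k < p + q) (hc : Da p q Fl k ∧ Db p q Fl k) :
    ¬ Da p q Fl (sI p q Fl k - 1) ∧ ¬ Db p q Fl (sI p q Fl k - 1) := by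
  set s := sI p q Fl k with hs_def
  have hs1 : 1 ≤ s := sI_pos p q Fl k hk hc
  have hsk : s ≤ k := sI_le p q Fl k hk hc
  have hmem : s ∈ Sset p q Fl k := sI_mem p q Fl k hk hc
  have hs1e : s - 1 + 1 = s := by omega
  constructor
  · intro hDa
    obtain ⟨e, he1, he2, he3⟩ := (Da_iff p q Fl (s - 1) (by omega)).1 hDa
    rw [hs1e] at he1
    have hspan : FF Fl s = FF Fl (s - 1) ⊔ ℂ ∙ e := by
      rw [← hs1e]
      exact span_step p q Fl (s - 1) (by omega) e (by rwa [hs1e]) he3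
    have hle : (FF Fl s).map (projE (p + q) p) ⊔ FF Fl k
        ≤ (FF Fl (s - 1)).map (projE (p + q) p) ⊔ FF Fl k := by
      rw [hspan, Submodule.map_sup]
      have hπe : (ℂ ∙ e).map (projE (p + q) p) = ℂ ∙ e := by
        rw [Submodule.map_span, Set.image_singleton, projE_eq_self_of_mem he2]
      rw [hπe]
      apply sup_le (sup_le le_sup_left _) le_sup_right
      rw [Submodule.span_singleton_le_iff_mem]
      exact Submodule.mem_sup_right (FF_mono Fl hsk he1)
    have hsm : s - 1 ∈ Sset p q Fl k := le_trans hmem hle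
    have h3 : s ≤ s - 1 := by rw [hs_def]; exact Nat.sInf_le hsm
    omega
  · intro hDb
    obtain ⟨f, hf1, hf2, hf3⟩ := (Db_iff p q Fl (s - 1) (by omega)).1 hDb
    rw [hs1e] at hf1
    have hspan : FF Fl s = FF Fl (s - 1) ⊔ ℂ ∙ f := by
      rw [← hs1e]
      exact span_step p q Fl (s - 1) (by omega) f (by rwa [hs1e]) hf3
    have hle : (FF Fl s).map (projE (p + q) p) ⊔ FF Fl k
        ≤ (FF Fl (s - 1)).map (projE (p + q) p) ⊔ FF Fl k := by
      rw [hspan, Submodule.map_sup]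
      have hπf : (ℂ ∙ f).map (projE (p + q) p) = ⊥ := by
        rw [Submodule.map_span, Set.image_singleton, projE_eq_zero_iff.2 hf2,
          Submodule.span_zero_singleton]
      rw [hπf, sup_bot_eq]
    have hsm : s - 1 ∈ Sset p q Fl k := le_trans hmem hle
    have h3 : s ≤ s - 1 := by rw [hs_def]; exact Nat.sInf_le hsm
    omega

/-- Injectivity: distinct closers have distinct matched positions. -/
lemma sI_inj (k k' : ℕ) (hkk' : k < k') (hk' : k' < p + q)
    (hck : Da p q Fl k ∧ Db p q Fl k) (hck' : Da p q Fl k' ∧ Db p q Fl k') :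
    sI p q Fl k ≠ sI p q Fl k' := by
  intro heq
  have hk : k < p + q := by omega
  set σ := sI p q Fl k with hσ_def
  have hσ1 : 1 ≤ σ := sI_pos p q Fl k hk hck
  have hσk : σ ≤ k := sI_le p q Fl k hk hck
  have hmem : σ ∈ Sset p q Fl k := sI_mem p q Fl k hk hck
  have hmem' : σ ∈ Sset p q Fl k' := heq ▸ sI_mem p q Fl k' hk' hck'
  have hσ1e : σ - 1 + 1 = σ := by omega
  -- step vector at position σ - 1
  obtain ⟨x, hx1, hx2, hxspan⟩ := exists_step Fl (σ - 1) (by omega)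
  rw [hσ1e] at hx1 hxspan
  -- step vector at position k
  obtain ⟨v, hv1, hv2, hvspan⟩ := exists_step Fl k hk
  have hmapσ : (FF Fl σ).map (projE (p + q) p)
      = (FF Fl (σ - 1)).map (projE (p + q) p) ⊔ ℂ ∙ (projE (p + q) p x) := by
    rw [hxspan, Submodule.map_sup, Submodule.map_span, Set.image_singleton]
  have hvin : v ∈ (FF Fl σ).map (projE (p + q) p) ⊔ FF Fl k := hmem hv1
  rw [hmapσ, sup_assoc] at hvin
  rw [Submodule.mem_sup] at hvin
  obtain ⟨u, hu, y, hy, hsum⟩ := hvin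
  rw [Submodule.mem_sup] at hy
  obtain ⟨z, hz, w, hw, hsum2⟩ := hy
  rw [Submodule.mem_span_singleton] at hz
  obtain ⟨c, rfl⟩ := hz
  by_cases hc0 : c = 0
  · -- v lands in map π F(σ-1) ⊔ F k, contradicting minimality of σ for k
    have hv' : v ∈ (FF Fl (σ - 1)).map (projE (p + q) p) ⊔ FF Fl k := by
      rw [Submodule.mem_sup]
      refine ⟨u, hu, w, hw, ?_⟩
      rw [← hsum, ← hsum2, hc0, zero_smul, zero_add]
    have hs : σ - 1 ∈ Sset p q Fl k := by
      show FF Fl (k + 1) ≤ _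
      rw [hvspan]
      exact sup_le le_sup_right ((Submodule.span_singleton_le_iff_mem _ _).2 hv')
    have h3 : σ ≤ σ - 1 := by rw [hσ_def]; exact Nat.sInf_le hs
    omega
  · -- π x ∈ map π F(σ-1) ⊔ F (k+1)
    have hcx : c • projE (p + q) p x = v - u - w := by
      have : u + (c • projE (p + q) p x + w) = v := by rw [hsum2, hsum]
      rw [← this]; abel
    have hπx : projE (p + q) p x ∈ (FF Fl (σ - 1)).map (projE (p + q) p) ⊔ FF Fl (k + 1) := by
      have hmemsub : v - u - w ∈ (FF Fl (σ - 1)).map (projE (p + q) p) ⊔ FF Fl (k + 1) := by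
        rw [Submodule.mem_sup]
        exact ⟨-u, neg_mem hu, v - w, sub_mem hv1 (FF_mono Fl (by omega) hw), by abel⟩
      have := Submodule.smul_mem _ c⁻¹ hmemsub
      rw [← hcx, smul_smul, inv_mul_cancel₀ hc0, one_smul] at this
      exact this
    have hs' : σ - 1 ∈ Sset p q Fl k' := by
      show FF Fl (k' + 1) ≤ _
      calc FF Fl (k' + 1)
          ≤ (FF Fl σ).map (projE (p + q) p) ⊔ FF Fl k' := hmem'
        _ ≤ (FF Fl (σ - 1)).map (projE (p + q) p) ⊔ FF Fl k' := by
            rw [hmapσ]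
            apply sup_le (sup_le le_sup_left _) le_sup_right
            refine le_trans ((Submodule.span_singleton_le_iff_mem _ _).2 hπx) ?_
            exact sup_le_sup_left (FF_mono Fl (by omega : k + 1 ≤ k')) _
    have h3 : sI p q Fl k' ≤ σ - 1 := Nat.sInf_le hs'
    rw [← heq] at h3
    omega

end Main2
/-! ### Closers, openers, and the matching -/

section Main3

variable (p q : ℕ) (Fl : CompleteFlag (p + q))

def Closers : Finset (Fin (p + q)) :=
  univ.filter fun k => Da p q Fl k.val ∧ Db p q Fl k.val

def Openers : Finset (Fin (p + q)) :=
  univ.filter fun k => ¬Da p q Fl k.val ∧ ¬Db p q Fl k.val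

lemma split_card {m : ℕ} (P Q : Fin m → Prop) [DecidablePred P] [DecidablePred Q] :
    (univ.filter fun k => P k ∧ Q k).card + (univ.filter fun k => P k ∧ ¬Q k).card
      = (univ.filter P).card := by
  rw [← Finset.filter_filter, ← Finset.filter_filter,
    Finset.card_filter_add_card_filter_not]

lemma card_Da : (univ.filter fun k : Fin (p + q) => Da p q Fl k.val).card = p := by
  have h := aF_last p q Fl
  rw [aF_eq_card p q Fl (p + q) le_rfl] at h
  have e : (univ.filter fun k : Fin (p + q) => k.val < p + q ∧ Da p q Fl k.val)
      = univ.filter fun k : Fin (p + q) => Da p q Fl k.val := by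
    ext k; simp [k.isLt]
  rw [e] at h
  exact h

lemma card_Db : (univ.filter fun k : Fin (p + q) => Db p q Fl k.val).card = q := by
  have h := bF_last p q Fl
  rw [bF_eq_card p q Fl (p + q) le_rfl] at h
  have e : (univ.filter fun k : Fin (p + q) => k.val < p + q ∧ Db p q Fl k.val)
      = univ.filter fun k : Fin (p + q) => Db p q Fl k.val := by
    ext k; simp [k.isLt]
  rw [e] at h
  exact h

lemma card_identities :
    (Closers p q Fl).card + (univ.filter fun k : Fin (p + q) =>
        Da p q Fl k.val ∧ ¬Db p q Fl k.val).card = p ∧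
    (Closers p q Fl).card + (univ.filter fun k : Fin (p + q) =>
        ¬Da p q Fl k.val ∧ Db p q Fl k.val).card = q ∧
    (Openers p q Fl).card = (Closers p q Fl).card := by
  classical
  have h1 := split_card (fun k : Fin (p + q) => Da p q Fl k.val)
    (fun k => Db p q Fl k.val)
  have h2 := split_card (fun k : Fin (p + q) => Db p q Fl k.val)
    (fun k => Da p q Fl k.val)
  have h3 := split_card (fun k : Fin (p + q) => ¬Da p q Fl k.val)
    (fun k => Db p q Fl k.val)
  have h4 := Finset.card_filter_add_card_filter_not
    (s := (univ : Finset (Fin (p + q)))) (p := fun k => Da p q Fl k.val)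
  have hDa := card_Da p q Fl
  have hDb := card_Db p q Fl
  have huniv : (univ : Finset (Fin (p + q))).card = p + q := by
    simp
  have e1 : (univ.filter fun k : Fin (p + q) => Db p q Fl k.val ∧ Da p q Fl k.val)
      = Closers p q Fl := by
    unfold Closers; ext k; simp; tauto
  have e2 : (univ.filter fun k : Fin (p + q) => Db p q Fl k.val ∧ ¬Da p q Fl k.val)
      = univ.filter fun k : Fin (p + q) => ¬Da p q Fl k.val ∧ Db p q Fl k.val := by
    ext k; simp; tauto
  have e3 : (univ.filter fun k : Fin (p + q) => ¬Da p q Fl k.val ∧ ¬Db p q Fl k.val)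
      = Openers p q Fl := rfl
  have e4 : (univ.filter fun k : Fin (p + q) => Da p q Fl k.val ∧ Db p q Fl k.val)
      = Closers p q Fl := rfl
  rw [e1, e2, hDb] at h2
  rw [e3] at h3
  rw [e4, hDa] at h1
  rw [hDa, huniv] at h4
  omega

lemma mateIdx_lt (k : Fin (p + q)) (hc : k ∈ Closers p q Fl) :
    sI p q Fl k.val - 1 < k.val := by
  rw [Closers, Finset.mem_filter] at hc
  have h1 := sI_pos p q Fl k.val k.isLt hc.2
  have h2 := sI_le p q Fl k.val k.isLt hc.2
  omega

lemma closer_eq_of_sI_eq (k k' : Fin (p + q)) (hk : k ∈ Closers p q Fl)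
    (hk' : k' ∈ Closers p q Fl) (h : sI p q Fl k.val = sI p q Fl k'.val) : k = k' := by
  rw [Closers, Finset.mem_filter] at hk hk'
  rcases lt_trichotomy k.val k'.val with hlt | heq | hlt
  · exact absurd h (sI_inj p q Fl k.val k'.val hlt k'.isLt hk.2 hk'.2)
  · exact Fin.ext heq
  · exact absurd h.symm (sI_inj p q Fl k'.val k.val hlt k.isLt hk'.2 hk.2)

lemma exists_closer_of_opener (m : Fin (p + q)) (hm : m ∈ Openers p q Fl) :
    ∃ k : Fin (p + q), k ∈ Closers p q Fl ∧ sI p q Fl k.val - 1 = m.val := by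
  classical
  set g : Fin (p + q) → Fin (p + q) := fun k =>
    if hc : k ∈ Closers p q Fl then ⟨sI p q Fl k.val - 1,
      lt_trans (mateIdx_lt p q Fl k hc) k.isLt⟩ else k with hg_def
  have hsub : (Closers p q Fl).image g ⊆ Openers p q Fl := by
    intro m' hm'
    rw [Finset.mem_image] at hm'
    obtain ⟨k, hk, rfl⟩ := hm'
    have hk' := hk
    rw [Closers, Finset.mem_filter] at hk'
    have hop := opener_of_closer p q Fl k.val k.isLt hk'.2
    rw [hg_def]
    simp only [dif_pos hk]
    rw [Openers, Finset.mem_filter]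
    exact ⟨Finset.mem_univ _, hop⟩
  have hinj : Set.InjOn g (Closers p q Fl) := by
    intro k hk k' hk' hgkk
    have hkf : k ∈ Closers p q Fl := Finset.mem_coe.1 hk
    have hkf' : k' ∈ Closers p q Fl := Finset.mem_coe.1 hk'
    rw [hg_def] at hgkk
    simp only [dif_pos hkf, dif_pos hkf'] at hgkk
    have hval : sI p q Fl k.val - 1 = sI p q Fl k'.val - 1 := congrArg Fin.val hgkk
    have hk2 := hkf; have hk2' := hkf'
    rw [Closers, Finset.mem_filter] at hk2 hk2'
    have p1 := sI_pos p q Fl k.val k.isLt hk2.2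
    have p2 := sI_pos p q Fl k'.val k'.isLt hk2'.2
    exact closer_eq_of_sI_eq p q Fl k k' hkf hkf' (by omega)
  have hcard : ((Closers p q Fl).image g).card = (Openers p q Fl).card := by
    rw [Finset.card_image_of_injOn hinj, (card_identities p q Fl).2.2]
  have heq : (Closers p q Fl).image g = Openers p q Fl :=
    Finset.eq_of_subset_of_card_le hsub (le_of_eq hcard.symm)
  have : m ∈ (Closers p q Fl).image g := heq ▸ hm
  rw [Finset.mem_image] at this
  obtain ⟨k, hk, hgk⟩ := this
  refine ⟨k, hk, ?_⟩
  rw [hg_def] at hgk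
  simp only [dif_pos hk] at hgk
  exact congrArg Fin.val hgk

def clMateNat (m : ℕ) : ℕ :=
  sInf {k : ℕ | ∃ hk : k < p + q,
    (Da p q Fl k ∧ Db p q Fl k) ∧ sI p q Fl k - 1 = m}

lemma clMateNat_spec (m : Fin (p + q)) (hm : m ∈ Openers p q Fl) :
    ∃ hk : clMateNat p q Fl m.val < p + q,
      (Da p q Fl (clMateNat p q Fl m.val) ∧ Db p q Fl (clMateNat p q Fl m.val)) ∧
      sI p q Fl (clMateNat p q Fl m.val) - 1 = m.val := by
  obtain ⟨k, hk, hsk⟩ := exists_closer_of_opener p q Fl m hm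
  rw [Closers, Finset.mem_filter] at hk
  exact Nat.sInf_mem (⟨k.val, k.isLt, hk.2, hsk⟩ :
    {k : ℕ | ∃ hk : k < p + q,
      (Da p q Fl k ∧ Db p q Fl k) ∧ sI p q Fl k - 1 = m.val}.Nonempty)

lemma clMateNat_unique (m : Fin (p + q)) (hm : m ∈ Openers p q Fl)
    (k : ℕ) (hk : k < p + q) (hck : Da p q Fl k ∧ Db p q Fl k)
    (hsk : sI p q Fl k - 1 = m.val) : k = clMateNat p q Fl m.val := by
  obtain ⟨hk', hck', hsk'⟩ := clMateNat_spec p q Fl m hm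
  have p1 := sI_pos p q Fl k hk hck
  have p2 := sI_pos p q Fl _ hk' hck'
  have heq : sI p q Fl k = sI p q Fl (clMateNat p q Fl m.val) := by omega
  have := closer_eq_of_sI_eq p q Fl ⟨k, hk⟩ ⟨_, hk'⟩
    (by rw [Closers, Finset.mem_filter]; exact ⟨Finset.mem_univ _, hck⟩)
    (by rw [Closers, Finset.mem_filter]; exact ⟨Finset.mem_univ _, hck'⟩) heq
  exact congrArg Fin.val this

def mateF (x : Fin (p + q)) : Fin (p + q) :=
  if hc : x ∈ Closers p q Fl then
    ⟨sI p q Fl x.val - 1, lt_trans (mateIdx_lt p q Fl x hc) x.isLt⟩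
  else if ho : x ∈ Openers p q Fl then
    ⟨clMateNat p q Fl x.val, (clMateNat_spec p q Fl x ho).1⟩
  else x

lemma closer_not_opener (x : Fin (p + q)) (hc : x ∈ Closers p q Fl) :
    x ∉ Openers p q Fl := by
  rw [Closers, Finset.mem_filter] at hc
  rw [Openers, Finset.mem_filter]
  tauto

lemma mateF_of_closer (x : Fin (p + q)) (hc : x ∈ Closers p q Fl) :
    (mateF p q Fl x).val = sI p q Fl x.val - 1 ∧ mateF p q Fl x ∈ Openers p q Fl ∧
      mateF p q Fl x < x := by
  have hc2 := hc
  rw [Closers, Finset.mem_filter] at hc2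
  have hop := opener_of_closer p q Fl x.val x.isLt hc2.2
  unfold mateF
  rw [dif_pos hc]
  refine ⟨rfl, ?_, ?_⟩
  · rw [Openers, Finset.mem_filter]
    exact ⟨Finset.mem_univ _, hop⟩
  · exact mateIdx_lt p q Fl x hc

lemma mateF_of_opener (x : Fin (p + q)) (ho : x ∈ Openers p q Fl) :
    mateF p q Fl x ∈ Closers p q Fl ∧
      sI p q Fl (mateF p q Fl x).val - 1 = x.val ∧ x < mateF p q Fl x := by
  have hxnc : x ∉ Closers p q Fl := by
    rw [Openers, Finset.mem_filter] at ho
    rw [Closers, Finset.mem_filter]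
    tauto
  obtain ⟨hk, hck, hsk⟩ := clMateNat_spec p q Fl x ho
  unfold mateF
  rw [dif_neg hxnc, dif_pos ho]
  have hcmem : (⟨clMateNat p q Fl x.val, hk⟩ : Fin (p + q)) ∈ Closers p q Fl := by
    rw [Closers, Finset.mem_filter]
    exact ⟨Finset.mem_univ _, hck⟩
  refine ⟨hcmem, hsk, ?_⟩
  have hlt := mateIdx_lt p q Fl ⟨clMateNat p q Fl x.val, hk⟩ hcmem
  simp only [Fin.val_mk] at hlt
  simp only [Fin.lt_def, Fin.val_mk]
  omega

lemma mateF_invol (x : Fin (p + q)) (h : x ∈ Closers p q Fl ∨ x ∈ Openers p q Fl) :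
    mateF p q Fl (mateF p q Fl x) = x := by
  rcases h with hc | ho
  · obtain ⟨hval, hop, _⟩ := mateF_of_closer p q Fl x hc
    obtain ⟨hc', hs', _⟩ := mateF_of_opener p q Fl (mateF p q Fl x) hop
    rw [hval] at hs'
    have hc2 := hc
    rw [Closers, Finset.mem_filter] at hc2
    have p1 := sI_pos p q Fl x.val x.isLt hc2.2
    have hc2' := hc'
    rw [Closers, Finset.mem_filter] at hc2'
    have p2 := sI_pos p q Fl _ (mateF p q Fl (mateF p q Fl x)).isLt hc2'.2
    exact closer_eq_of_sI_eq p q Fl _ _ hc' hc (by omega)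
  · obtain ⟨hc', hs', _⟩ := mateF_of_opener p q Fl x ho
    obtain ⟨hval, _, _⟩ := mateF_of_closer p q Fl (mateF p q Fl x) hc'
    exact Fin.ext (by rw [hval, hs'])

/-- The symbol function of the clan attached to the flag. -/
def symF (x : Fin (p + q)) : Fin (p + q) ⊕ Bool :=
  if x ∈ Closers p q Fl ∨ x ∈ Openers p q Fl then Sum.inl (mateF p q Fl x)
  else if Da p q Fl x.val then Sum.inr true else Sum.inr false

lemma symF_eq_inr_true_iff (x : Fin (p + q)) :
    symF p q Fl x = Sum.inr true ↔ Da p q Fl x.val ∧ ¬Db p q Fl x.val := by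
  unfold symF
  by_cases h : x ∈ Closers p q Fl ∨ x ∈ Openers p q Fl
  · rw [if_pos h]
    rcases h with hc | ho
    · rw [Closers, Finset.mem_filter] at hc
      simp; tauto
    · rw [Openers, Finset.mem_filter] at ho
      simp; tauto
  · rw [if_neg h]
    have h' : ¬(Da p q Fl x.val ∧ Db p q Fl x.val) ∧ ¬(¬Da p q Fl x.val ∧ ¬Db p q Fl x.val) := by
      constructor
      · intro hcc
        exact h (Or.inl (by rw [Closers, Finset.mem_filter]; exact ⟨Finset.mem_univ _, hcc⟩))
      · intro hoo
        exact h (Or.inr (by rw [Openers, Finset.mem_filter]; exact ⟨Finset.mem_univ _, hoo⟩))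
    by_cases hDa : Da p q Fl x.val
    · rw [if_pos hDa]; simp [hDa]; tauto
    · rw [if_neg hDa]; simp [hDa]

lemma symF_eq_inr_false_iff (x : Fin (p + q)) :
    symF p q Fl x = Sum.inr false ↔ ¬Da p q Fl x.val ∧ Db p q Fl x.val := by
  unfold symF
  by_cases h : x ∈ Closers p q Fl ∨ x ∈ Openers p q Fl
  · rw [if_pos h]
    rcases h with hc | ho
    · rw [Closers, Finset.mem_filter] at hc
      simp; tauto
    · rw [Openers, Finset.mem_filter] at ho
      simp; tauto
  · rw [if_neg h]
    have h' : ¬(Da p q Fl x.val ∧ Db p q Fl x.val) ∧ ¬(¬Da p q Fl x.val ∧ ¬Db p q Fl x.val) := by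
      constructor
      · intro hcc
        exact h (Or.inl (by rw [Closers, Finset.mem_filter]; exact ⟨Finset.mem_univ _, hcc⟩))
      · intro hoo
        exact h (Or.inr (by rw [Openers, Finset.mem_filter]; exact ⟨Finset.mem_univ _, hoo⟩))
    by_cases hDa : Da p q Fl x.val
    · rw [if_pos hDa]; simp [hDa]
    · rw [if_neg hDa]; simp [hDa]; tauto

lemma symF_closer (x : Fin (p + q)) (hc : x ∈ Closers p q Fl) :
    symF p q Fl x = Sum.inl (mateF p q Fl x) := by
  unfold symF
  rw [if_pos (Or.inl hc)]

lemma symF_opener (x : Fin (p + q)) (ho : x ∈ Openers p q Fl) :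
    symF p q Fl x = Sum.inl (mateF p q Fl x) := by
  unfold symF
  rw [if_pos (Or.inr ho)]

lemma symF_inl (x j : Fin (p + q)) (h : symF p q Fl x = Sum.inl j) :
    (x ∈ Closers p q Fl ∨ x ∈ Openers p q Fl) ∧ j = mateF p q Fl x := by
  unfold symF at h
  by_cases hco : x ∈ Closers p q Fl ∨ x ∈ Openers p q Fl
  · rw [if_pos hco] at h
    exact ⟨hco, (Sum.inl.inj h).symm⟩
  · rw [if_neg hco] at h
    by_cases hDa : Da p q Fl x.val
    · rw [if_pos hDa] at h; exact absurd h (by simp)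
    · rw [if_neg hDa] at h; exact absurd h (by simp)

/-- The clan attached to the flag. -/
def clanF : Clan p q where
  symbol := symF p q Fl
  mate_ne := by
    intro i j h
    obtain ⟨hco, rfl⟩ := symF_inl p q Fl i j h
    rcases hco with hc | ho
    · exact ne_of_lt (mateF_of_closer p q Fl i hc).2.2
    · exact ne_of_gt (mateF_of_opener p q Fl i ho).2.2
  mate_invol := by
    intro i j h
    obtain ⟨hco, rfl⟩ := symF_inl p q Fl i j h
    have hmem : mateF p q Fl i ∈ Closers p q Fl ∨ mateF p q Fl i ∈ Openers p q Fl := by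
      rcases hco with hc | ho
      · exact Or.inr (mateF_of_closer p q Fl i hc).2.1
      · exact Or.inl (mateF_of_opener p q Fl i ho).1
    have : symF p q Fl (mateF p q Fl i) = Sum.inl (mateF p q Fl (mateF p q Fl i)) := by
      rcases hmem with h' | h'
      · exact symF_closer p q Fl _ h'
      · exact symF_opener p q Fl _ h'
    rw [this, mateF_invol p q Fl i hco]
  balance := by
    classical
    have e1 : (univ.filter fun i : Fin (p + q) => symF p q Fl i = Sum.inr true)
        = univ.filter fun i : Fin (p + q) => Da p q Fl i.val ∧ ¬Db p q Fl i.val := by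
      ext i
      simp only [Finset.mem_filter, Finset.mem_univ, true_and]
      exact symF_eq_inr_true_iff p q Fl i
    have e2 : (univ.filter fun i : Fin (p + q) => symF p q Fl i = Sum.inr false)
        = univ.filter fun i : Fin (p + q) => ¬Da p q Fl i.val ∧ Db p q Fl i.val := by
      ext i
      simp only [Finset.mem_filter, Finset.mem_univ, true_and]
      exact symF_eq_inr_false_iff p q Fl i
    obtain ⟨h1, h2, _⟩ := card_identities p q Fl
    rw [e1, e2]
    omega

end Main3
/-! ### The clan of a flag belongs to `Q` -/

section Main4

variable (p q : ℕ) (Fl : CompleteFlag (p + q))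

lemma plus_pred_iff (k : Fin (p + q)) :
    (symF p q Fl k = Sum.inr true ∨ ∃ j, symF p q Fl k = Sum.inl j ∧ j < k)
      ↔ Da p q Fl k.val := by
  constructor
  · rintro (h | ⟨j, hj, hlt⟩)
    · exact ((symF_eq_inr_true_iff p q Fl k).1 h).1
    · obtain ⟨hco, rfl⟩ := symF_inl p q Fl k j hj
      rcases hco with hc | ho
      · rw [Closers, Finset.mem_filter] at hc
        exact hc.2.1
      · exact absurd hlt (not_lt_of_gt (mateF_of_opener p q Fl k ho).2.2)
  · intro hDa
    by_cases hDb : Db p q Fl k.val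
    · have hc : k ∈ Closers p q Fl := by
        rw [Closers, Finset.mem_filter]; exact ⟨Finset.mem_univ _, hDa, hDb⟩
      exact Or.inr ⟨mateF p q Fl k, symF_closer p q Fl k hc,
        (mateF_of_closer p q Fl k hc).2.2⟩
    · exact Or.inl ((symF_eq_inr_true_iff p q Fl k).2 ⟨hDa, hDb⟩)

lemma minus_pred_iff (k : Fin (p + q)) :
    (symF p q Fl k = Sum.inr false ∨ ∃ j, symF p q Fl k = Sum.inl j ∧ j < k)
      ↔ Db p q Fl k.val := by
  constructor
  · rintro (h | ⟨j, hj, hlt⟩)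
    · exact ((symF_eq_inr_false_iff p q Fl k).1 h).2
    · obtain ⟨hco, rfl⟩ := symF_inl p q Fl k j hj
      rcases hco with hc | ho
      · rw [Closers, Finset.mem_filter] at hc
        exact hc.2.2
      · exact absurd hlt (not_lt_of_gt (mateF_of_opener p q Fl k ho).2.2)
  · intro hDb
    by_cases hDa : Da p q Fl k.val
    · have hc : k ∈ Closers p q Fl := by
        rw [Closers, Finset.mem_filter]; exact ⟨Finset.mem_univ _, hDa, hDb⟩
      exact Or.inr ⟨mateF p q Fl k, symF_closer p q Fl k hc,
        (mateF_of_closer p q Fl k hc).2.2⟩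
    · exact Or.inl ((symF_eq_inr_false_iff p q Fl k).2 ⟨hDa, hDb⟩)

lemma cplus_clanF (i : ℕ) (hi : i ≤ p + q) :
    (clanF p q Fl).cplus i = aF p q Fl i := by
  unfold Clan.cplus
  rw [aF_eq_card p q Fl i hi]
  congr 1
  ext k
  simp only [Finset.mem_filter, Finset.mem_univ, true_and, and_congr_right_iff]
  intro _
  exact plus_pred_iff p q Fl k

lemma cminus_clanF (i : ℕ) (hi : i ≤ p + q) :
    (clanF p q Fl).cminus i = bF p q Fl i := by
  unfold Clan.cminus
  rw [bF_eq_card p q Fl i hi]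
  congr 1
  ext k
  simp only [Finset.mem_filter, Finset.mem_univ, true_and, and_congr_right_iff]
  intro _
  exact minus_pred_iff p q Fl k

def NN (i j : ℕ) : ℕ :=
  (univ.filter fun t : Fin (p + q) =>
    t ∈ Closers p q Fl ∧ sI p q Fl t.val ≤ i ∧ j ≤ t.val).card

lemma cpair_clanF (i j : ℕ) (hi1 : 1 ≤ i) :
    (clanF p q Fl).cpair i j = NN p q Fl i j := by
  classical
  unfold Clan.cpair NN
  apply Finset.card_bij' (fun s _ => mateF p q Fl s) (fun t _ => mateF p q Fl t)
  · -- forward membership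
    intro s hs
    rw [Finset.mem_filter] at hs
    obtain ⟨_, hsi, t', hinl, hslt, hjle⟩ := hs
    obtain ⟨hco, rfl⟩ := symF_inl p q Fl s t' hinl
    have ho : s ∈ Openers p q Fl := by
      rcases hco with hc | ho
      · exact absurd hslt (not_lt_of_gt (mateF_of_closer p q Fl s hc).2.2)
      · exact ho
    obtain ⟨hcl, hsIval, _⟩ := mateF_of_opener p q Fl s ho
    rw [Finset.mem_filter]
    refine ⟨Finset.mem_univ _, hcl, ?_, hjle⟩
    have hc2 := hcl
    rw [Closers, Finset.mem_filter] at hc2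
    have := sI_pos p q Fl (mateF p q Fl s).val (mateF p q Fl s).isLt hc2.2
    omega
  · -- backward membership
    intro t ht
    rw [Finset.mem_filter] at ht
    obtain ⟨_, hcl, hsle, hjle⟩ := ht
    obtain ⟨hval, hop, hlt⟩ := mateF_of_closer p q Fl t hcl
    rw [Finset.mem_filter]
    have hc2 := hcl
    rw [Closers, Finset.mem_filter] at hc2
    have hpos := sI_pos p q Fl t.val t.isLt hc2.2
    refine ⟨Finset.mem_univ _, by omega, t, ?_, hlt, hjle⟩
    show symF p q Fl (mateF p q Fl t) = Sum.inl t
    rw [symF_opener p q Fl (mateF p q Fl t) hop, mateF_invol p q Fl t (Or.inl hcl)]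
  · -- left inverse
    intro s hs
    rw [Finset.mem_filter] at hs
    obtain ⟨_, hsi, t', hinl, hslt, hjle⟩ := hs
    obtain ⟨hco, rfl⟩ := symF_inl p q Fl s t' hinl
    exact mateF_invol p q Fl s hco
  · -- right inverse
    intro t ht
    rw [Finset.mem_filter] at ht
    exact mateF_invol p q Fl t (Or.inl ht.2.1)

lemma NN_top (i : ℕ) : NN p q Fl i (p + q) = 0 := by
  unfold NN
  rw [Finset.card_eq_zero]
  apply Finset.filter_false_of_mem
  intro t _
  rintro ⟨_, _, hle⟩
  exact absurd hle (by have := t.isLt; omega)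

lemma master (d : ℕ) : ∀ j i : ℕ, p + q - j = d → 1 ≤ i → i < j → j ≤ p + q →
    finrank ℂ ↥((FF Fl i).map (projE (p + q) p) ⊔ FF Fl j) = j + NN p q Fl i j := by
  induction d with
  | zero =>
      intro j i hd hi1 hij hj
      have hj' : j = p + q := by omega
      subst hj'
      rw [FF_top, sup_top_eq, finrank_top, finrank_pi_n, NN_top, add_zero]
  | succ d ih =>
      intro j i hd hi1 hij hj
      have hjlt : j < p + q := by omega
      have ihj := ih (j + 1) i (by omega) hi1 (by omega) (by omega)
      by_cases hin : i ∈ Sset p q Fl j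
      · obtain ⟨hcl, hsle⟩ := (mem_Sset_iff p q Fl i j hi1 (by omega) hjlt).1 hin
        have hsup_eq : (FF Fl i).map (projE (p + q) p) ⊔ FF Fl (j + 1)
            = (FF Fl i).map (projE (p + q) p) ⊔ FF Fl j := by
          apply le_antisymm
          · exact sup_le le_sup_left hin
          · exact sup_le_sup_left (FF_mono Fl (by omega)) _
        rw [hsup_eq] at ihj
        set t₀ : Fin (p + q) := ⟨j, hjlt⟩ with ht₀
        have ht₀cl : t₀ ∈ Closers p q Fl := by
          rw [Closers, Finset.mem_filter]
          exact ⟨Finset.mem_univ _, hcl⟩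
        have hNN : NN p q Fl i j = NN p q Fl i (j + 1) + 1 := by
          unfold NN
          have hins : (univ.filter fun t : Fin (p + q) =>
              t ∈ Closers p q Fl ∧ sI p q Fl t.val ≤ i ∧ j ≤ t.val)
              = insert t₀ (univ.filter fun t : Fin (p + q) =>
                  t ∈ Closers p q Fl ∧ sI p q Fl t.val ≤ i ∧ j + 1 ≤ t.val) := by
            ext t
            simp only [Finset.mem_filter, Finset.mem_univ, true_and, Finset.mem_insert]
            constructor
            · rintro ⟨h1, h2, h3⟩
              rcases Nat.eq_or_lt_of_le h3 with h | h
              · exact Or.inl (Fin.ext h.symm)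
              · exact Or.inr ⟨h1, h2, h⟩
            · rintro (rfl | ⟨h1, h2, h3⟩)
              · exact ⟨ht₀cl, hsle, le_rfl⟩
              · exact ⟨h1, h2, by omega⟩
          rw [hins, Finset.card_insert_of_notMem (by
            simp only [Finset.mem_filter, Finset.mem_univ, true_and, ht₀, not_and]
            intro _ _
            omega)]
        rw [ihj, hNN]
        omega
      · have hnc : ¬((Da p q Fl j ∧ Db p q Fl j) ∧ sI p q Fl j ≤ i) :=
          fun h => hin ((mem_Sset_iff p q Fl i j hi1 (by omega) hjlt).2 h)
        obtain ⟨v, hv1, hv2, hvspan⟩ := exists_step Fl j hjlt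
        set A := (FF Fl i).map (projE (p + q) p) ⊔ FF Fl j with hA
        have hvA : v ∉ A := by
          intro hvA
          apply hin
          show FF Fl (j + 1) ≤ _
          rw [hvspan]
          exact sup_le le_sup_right ((Submodule.span_singleton_le_iff_mem _ _).2 hvA)
        have hAv : (FF Fl i).map (projE (p + q) p) ⊔ FF Fl (j + 1) = A ⊔ ℂ ∙ v := by
          rw [hA, hvspan, sup_assoc]
        have hrank : finrank ℂ ↥((FF Fl i).map (projE (p + q) p) ⊔ FF Fl (j + 1))
            = finrank ℂ ↥A + 1 := by
          rw [hAv, finrank_sup_span A v hvA]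
        have hNN : NN p q Fl i j = NN p q Fl i (j + 1) := by
          unfold NN
          congr 1
          ext t
          simp only [Finset.mem_filter, Finset.mem_univ, true_and]
          constructor
          · rintro ⟨h1, h2, h3⟩
            refine ⟨h1, h2, ?_⟩
            rcases Nat.eq_or_lt_of_le h3 with h | h
            · exfalso
              apply hnc
              have h1' := h1
              rw [Closers, Finset.mem_filter] at h1'
              rw [← h] at h1' h2
              exact ⟨h1'.2, h2⟩
            · exact h
          · rintro ⟨h1, h2, h3⟩
            exact ⟨h1, h2, by omega⟩
        rw [ihj] at hrank
        rw [hNN]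
        omega

/-- The flag belongs to `Q` of its clan. -/
theorem memQ_clanF : MemQ (clanF p q Fl) Fl := by
  constructor
  · intro i hi1 hi
    constructor
    · rw [← FF_eq Fl i hi, cplus_clanF p q Fl i hi]
      rfl
    · rw [← FF_eq Fl i hi, cminus_clanF p q Fl i hi]
      rfl
  · intro i j hi1 hij hj
    rw [← FF_eq Fl i (by omega), ← FF_eq Fl j hj, cpair_clanF p q Fl i j hi1]
    exact master p q Fl (p + q - j) j i rfl hi1 hij hj

end Main4
/-! ### Uniqueness: a clan is determined by its numerical invariants -/

section Unique

variable {p q : ℕ}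

/-- The "contributes to `cplus`" predicate. -/
def IA (γ : Clan p q) (k : Fin (p + q)) : Prop :=
  γ.symbol k = Sum.inr true ∨ ∃ j, γ.symbol k = Sum.inl j ∧ j < k

/-- The "contributes to `cminus`" predicate. -/
def IB (γ : Clan p q) (k : Fin (p + q)) : Prop :=
  γ.symbol k = Sum.inr false ∨ ∃ j, γ.symbol k = Sum.inl j ∧ j < k

lemma clan_classify (γ : Clan p q) (k : Fin (p + q)) :
    (γ.symbol k = Sum.inr true ↔ (IA γ k ∧ ¬IB γ k)) ∧
    (γ.symbol k = Sum.inr false ↔ (¬IA γ k ∧ IB γ k)) ∧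
    ((∃ j, γ.symbol k = Sum.inl j ∧ j < k) ↔ (IA γ k ∧ IB γ k)) ∧
    ((∃ j, γ.symbol k = Sum.inl j ∧ k < j) ↔ (¬IA γ k ∧ ¬IB γ k)) := by
  unfold IA IB
  rcases h : γ.symbol k with j | b
  · have hne := γ.mate_ne k j h
    rcases lt_or_gt_of_ne (fun he => hne (Fin.ext (congrArg Fin.val he))) with hj | hj
    · simp [hj, lt_asymm hj]
    · simp [hj, lt_asymm hj]
  · cases b <;> simp

lemma cplus_zero (γ : Clan p q) : γ.cplus 0 = 0 := by
  unfold Clan.cplus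
  rw [Finset.card_eq_zero]
  apply Finset.filter_false_of_mem
  intro x _
  rintro ⟨hx, _⟩
  omega

lemma cminus_zero (γ : Clan p q) : γ.cminus 0 = 0 := by
  unfold Clan.cminus
  rw [Finset.card_eq_zero]
  apply Finset.filter_false_of_mem
  intro x _
  rintro ⟨hx, _⟩
  omega

open scoped Classical in
lemma cplus_succ (γ : Clan p q) (k : ℕ) (hk : k < p + q) :
    γ.cplus (k + 1) = γ.cplus k + if IA γ ⟨k, hk⟩ then 1 else 0 := by
  classical
  unfold Clan.cplus
  have h := card_filter_lt_succ (fun x : Fin (p + q) => IA γ x) k hk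
  unfold IA at h
  convert h using 3
  ext x
  simp only [Finset.mem_filter]
  all_goals exact Iff.rfl

open scoped Classical in
lemma cminus_succ (γ : Clan p q) (k : ℕ) (hk : k < p + q) :
    γ.cminus (k + 1) = γ.cminus k + if IB γ ⟨k, hk⟩ then 1 else 0 := by
  classical
  unfold Clan.cminus
  have h := card_filter_lt_succ (fun x : Fin (p + q) => IB γ x) k hk
  unfold IB at h
  convert h using 3
  ext x
  simp only [Finset.mem_filter]
  all_goals exact Iff.rfl

open scoped Classical in
lemma IA_transfer (γ γ' : Clan p q)
    (h : ∀ i : ℕ, 1 ≤ i → i ≤ p + q → γ.cplus i = γ'.cplus i) (k : Fin (p + q)) :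
    IA γ k ↔ IA γ' k := by
  classical
  have h' : ∀ i : ℕ, i ≤ p + q → γ.cplus i = γ'.cplus i := by
    intro i hi
    rcases Nat.eq_zero_or_pos i with rfl | hpos
    · rw [cplus_zero, cplus_zero]
    · exact h i hpos hi
  have h1 := cplus_succ γ k.val k.isLt
  have h2 := cplus_succ γ' k.val k.isLt
  have e1 := h' (k.val + 1) (by omega)
  have e2 := h' k.val (by omega)
  have hmk : (⟨k.val, k.isLt⟩ : Fin (p + q)) = k := rfl
  rw [hmk] at h1 h2
  by_cases hA : IA γ k <;> by_cases hA' : IA γ' k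
  · exact iff_of_true hA hA'
  · rw [if_pos hA] at h1; rw [if_neg hA'] at h2; omega
  · rw [if_neg hA] at h1; rw [if_pos hA'] at h2; omega
  · exact iff_of_false hA hA'

open scoped Classical in
lemma IB_transfer (γ γ' : Clan p q)
    (h : ∀ i : ℕ, 1 ≤ i → i ≤ p + q → γ.cminus i = γ'.cminus i) (k : Fin (p + q)) :
    IB γ k ↔ IB γ' k := by
  classical
  have h' : ∀ i : ℕ, i ≤ p + q → γ.cminus i = γ'.cminus i := by
    intro i hi
    rcases Nat.eq_zero_or_pos i with rfl | hpos
    · rw [cminus_zero, cminus_zero]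
    · exact h i hpos hi
  have h1 := cminus_succ γ k.val k.isLt
  have h2 := cminus_succ γ' k.val k.isLt
  have e1 := h' (k.val + 1) (by omega)
  have e2 := h' k.val (by omega)
  have hmk : (⟨k.val, k.isLt⟩ : Fin (p + q)) = k := rfl
  rw [hmk] at h1 h2
  by_cases hB : IB γ k <;> by_cases hB' : IB γ' k
  · exact iff_of_true hB hB'
  · rw [if_pos hB] at h1; rw [if_neg hB'] at h2; omega
  · rw [if_neg hB] at h1; rw [if_pos hB'] at h2; omega
  · exact iff_of_false hB hB'

open scoped Classical in
lemma cpair_succ_closer (γ : Clan p q) (t m : Fin (p + q))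
    (hm : γ.symbol t = Sum.inl m) (hmt : m < t) (i : ℕ) :
    γ.cpair i t.val = γ.cpair i (t.val + 1) + if m.val < i then 1 else 0 := by
  classical
  have hmate : γ.symbol m = Sum.inl t := γ.mate_invol t m hm
  have hinj : ∀ u, γ.symbol m = Sum.inl u → u = t := by
    intro u hu
    rw [hmate] at hu
    exact Sum.inl.inj hu.symm
  have huniq : ∀ s u : Fin (p + q), γ.symbol s = Sum.inl u → u = t → s = m := by
    intro s u hsu hut
    rw [hut] at hsu
    have h2 : γ.symbol t = Sum.inl s := γ.mate_invol s t hsu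
    rw [hm] at h2
    exact (Sum.inl.inj h2).symm
  unfold Clan.cpair
  by_cases hmi : m.val < i
  · rw [if_pos hmi]
    have hins : (univ.filter fun s : Fin (p + q) =>
        s.val < i ∧ ∃ u, γ.symbol s = Sum.inl u ∧ s < u ∧ t.val ≤ u.val)
        = insert m (univ.filter fun s : Fin (p + q) =>
            s.val < i ∧ ∃ u, γ.symbol s = Sum.inl u ∧ s < u ∧ t.val + 1 ≤ u.val) := by
      ext s
      simp only [Finset.mem_filter, Finset.mem_univ, true_and, Finset.mem_insert]
      constructor
      · rintro ⟨hsi, u, hu, hsu, htu⟩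
        by_cases hut : u = t
        · exact Or.inl (huniq s u hu hut)
        · have : t.val ≠ u.val := fun he => hut (Fin.ext he.symm)
          exact Or.inr ⟨hsi, u, hu, hsu, by omega⟩
      · rintro (rfl | ⟨hsi, u, hu, hsu, htu⟩)
        · exact ⟨hmi, t, hmate, hmt, le_rfl⟩
        · exact ⟨hsi, u, hu, hsu, by omega⟩
    have hnotmem : m ∉ (univ.filter fun s : Fin (p + q) =>
        s.val < i ∧ ∃ u, γ.symbol s = Sum.inl u ∧ s < u ∧ t.val + 1 ≤ u.val) := by
      rw [Finset.mem_filter]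
      rintro ⟨_, _, u, hu, _, htu⟩
      rw [hinj u hu] at htu
      omega
    rw [hins, Finset.card_insert_of_notMem hnotmem]
  · rw [if_neg hmi, add_zero]
    congr 1
    ext s
    simp only [Finset.mem_filter, Finset.mem_univ, true_and]
    constructor
    · rintro ⟨hsi, u, hu, hsu, htu⟩
      refine ⟨hsi, u, hu, hsu, ?_⟩
      by_cases hut : u = t
      · have := huniq s u hu hut
        subst this
        exact absurd hsi hmi
      · have : t.val ≠ u.val := fun he => hut (Fin.ext he.symm)
        omega
    · rintro ⟨hsi, u, hu, hsu, htu⟩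
      exact ⟨hsi, u, hu, hsu, by omega⟩

lemma mate_eq (γ γ' : Clan p q)
    (hpair : ∀ i j : ℕ, 1 ≤ i → i < j → j ≤ p + q → γ.cpair i j = γ'.cpair i j)
    (t m m' : Fin (p + q)) (hm : γ.symbol t = Sum.inl m) (hmt : m < t)
    (hm' : γ'.symbol t = Sum.inl m') (hmt' : m' < t) : m = m' := by
  by_contra hne
  have hvne : m.val ≠ m'.val := fun he => hne (Fin.ext he)
  have htn : t.val < p + q := t.isLt
  rcases Nat.lt_or_ge m.val m'.val with hlt | hge
  · set i := m.val + 1 with hi_def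
    have hi1 : 1 ≤ i := by omega
    have hit : i < t.val := by
      have := hmt'
      rw [Fin.lt_def] at this
      omega
    have h1 := cpair_succ_closer γ t m hm hmt i
    have h2 := cpair_succ_closer γ' t m' hm' hmt' i
    rw [if_pos (by omega)] at h1
    rw [if_neg (by omega)] at h2
    have hA := hpair i t.val hi1 hit (by omega)
    have hB := hpair i (t.val + 1) hi1 (by omega) (by omega)
    omega
  · have hlt : m'.val < m.val := by omega
    set i := m'.val + 1 with hi_def
    have hi1 : 1 ≤ i := by omega
    have hit : i < t.val := by
      have := hmt
      rw [Fin.lt_def] at this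
      omega
    have h1 := cpair_succ_closer γ t m hm hmt i
    have h2 := cpair_succ_closer γ' t m' hm' hmt' i
    rw [if_neg (by omega)] at h1
    rw [if_pos (by omega)] at h2
    have hA := hpair i t.val hi1 hit (by omega)
    have hB := hpair i (t.val + 1) hi1 (by omega) (by omega)
    omega

/-- Two clans whose `Q`-sets share a flag are equal. -/
lemma clan_unique (Fl : CompleteFlag (p + q)) (γ γ' : Clan p q)
    (h : MemQ γ Fl) (h' : MemQ γ' Fl) : γ = γ' := by
  obtain ⟨hpm, hpair⟩ := h
  obtain ⟨hpm', hpair'⟩ := h'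
  have hplus : ∀ i : ℕ, 1 ≤ i → i ≤ p + q → γ.cplus i = γ'.cplus i := by
    intro i h1 h2
    rw [← (hpm i h1 h2).1, ← (hpm' i h1 h2).1]
  have hminus : ∀ i : ℕ, 1 ≤ i → i ≤ p + q → γ.cminus i = γ'.cminus i := by
    intro i h1 h2
    rw [← (hpm i h1 h2).2, ← (hpm' i h1 h2).2]
  have hpp : ∀ i j : ℕ, 1 ≤ i → i < j → j ≤ p + q → γ.cpair i j = γ'.cpair i j := by
    intro i j h1 h2 h3
    have e1 := hpair i j h1 h2 h3
    have e2 := hpair' i j h1 h2 h3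
    omega
  have hIA := IA_transfer γ γ' hplus
  have hIB := IB_transfer γ γ' hminus
  have hsym : γ.symbol = γ'.symbol := by
    funext k
    rcases hs : γ.symbol k with j | b
    · have hne := γ.mate_ne k j hs
      rcases lt_or_gt_of_ne (fun he => hne (Fin.ext (congrArg Fin.val he))) with hj | hj
      · -- closer at k
        have hCl : IA γ k ∧ IB γ k := (clan_classify γ k).2.2.1.1 ⟨j, hs, hj⟩
        have hCl' : IA γ' k ∧ IB γ' k := ⟨(hIA k).1 hCl.1, (hIB k).1 hCl.2⟩
        obtain ⟨j', hs', hj'⟩ := (clan_classify γ' k).2.2.1.2 hCl'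
        have hjj : j = j' := mate_eq γ γ' hpp k j j' hs hj hs' hj'
        rw [hs', hjj]
      · -- opener at k; consider the closer at j
        have hmate : γ.symbol j = Sum.inl k := γ.mate_invol k j hs
        have hCl : IA γ j ∧ IB γ j := (clan_classify γ j).2.2.1.1 ⟨k, hmate, hj⟩
        have hCl' : IA γ' j ∧ IB γ' j := ⟨(hIA j).1 hCl.1, (hIB j).1 hCl.2⟩
        obtain ⟨m', hs', hm'⟩ := (clan_classify γ' j).2.2.1.2 hCl'
        have hkm : k = m' := mate_eq γ γ' hpp j k m' hmate hj hs' hm'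
        have hfin : γ'.symbol k = Sum.inl j := γ'.mate_invol j k (hkm ▸ hs')
        rw [hfin]
    · cases b
      · have hT : ¬IA γ k ∧ IB γ k := (clan_classify γ k).2.1.1 hs
        have hT' : ¬IA γ' k ∧ IB γ' k :=
          ⟨fun ha => hT.1 ((hIA k).2 ha), (hIB k).1 hT.2⟩
        have hfin := (clan_classify γ' k).2.1.2 hT'
        rw [hfin]
      · have hT : IA γ k ∧ ¬IB γ k := (clan_classify γ k).1.1 hs
        have hT' : IA γ' k ∧ ¬IB γ' k :=
          ⟨(hIA k).1 hT.1, fun hb => hT.2 ((hIB k).2 hb)⟩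
        have hfin := (clan_classify γ' k).1.2 hT'
        rw [hfin]
  obtain ⟨s1, n1, i1, b1⟩ := γ
  obtain ⟨s2, n2, i2, b2⟩ := γ'
  simp only at hsym
  subst hsym
  rfl

end Unique

end QclanProof

/-- The sets `Q_γ`, as `γ` ranges over all `(p,q)`-clans,
partition the set of complete flags in `ℂⁿ`: every complete flag lies in
`Q_γ` for exactly one `(p,q)`-clan `γ`. -/
theorem Qclan_partition {p q : ℕ} (hn : 1 ≤ p + q) (Fl : CompleteFlag (p + q)) :
    ∃! γ : Clan p q, MemQ γ Fl := by
  exact ⟨QclanProof.clanF p q Fl, QclanProof.memQ_clanF p q Fl,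
    fun γ hγ => QclanProof.clan_unique Fl γ (QclanProof.clanF p q Fl) hγ
      (QclanProof.memQ_clanF p q Fl)⟩
end
end
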